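/- arXiv:1502.03704 — 7 statements merged into one kernel-verified Lean document; each statement's English description precedes it below -/
import Mathlib

section
/- Let d and r be coprime positive integers, and let Π = r(r+d)(r+2d)⋯(r+(N-1)d). Suppose that for every prime p dividing Π we remove one term r+id of maximal p-adic valuation among the terms (each term removed at most once), and let M be the total number of removed terms. Then the product of the first N-M terms satisfies r(r+d)⋯(r+(N-1-M)d) ≤ (N-1)!. -/
/-- The `i`-th element of a finset of naturals is at least `i`. -/
lemma aux_le_orderEmbOfFin (S : Finset ℕ) {m : ℕ} (h : S.card = m) :
    ∀ i : ℕ, ∀ hi : i < m, i ≤ S.orderEmbOfFin h ⟨i, hi⟩ := by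
  intro i
  induction i with
  | zero => intro _; exact Nat.zero_le _
  | succ n ih =>
    intro hi
    have h1 : n < m := Nat.lt_of_succ_lt hi
    have h2 := ih h1
    have h3 : S.orderEmbOfFin h ⟨n, h1⟩ < S.orderEmbOfFin h ⟨n + 1, hi⟩ :=
      (S.orderEmbOfFin h).strictMono (by simp [Fin.lt_def])
    omega

/-- Product of a monotone function over `range S.card` is at most the product over `S`. -/
lemma aux_prod_range_card_le (S : Finset ℕ) (g : ℕ → ℕ) (hg : Monotone g) :
    ∏ i ∈ Finset.range S.card, g i ≤ ∏ i ∈ S, g i := by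
  have key : ∏ x ∈ S, g x = ∏ i : Fin S.card, g (S.orderEmbOfFin rfl i) := by
    refine (Finset.prod_bij (fun i _ => S.orderEmbOfFin rfl i)
      (fun i _ => Finset.orderEmbOfFin_mem S rfl i)
      (fun a _ b _ h => (S.orderEmbOfFin rfl).injective h)
      (fun x hx => ?_) (fun i _ => rfl)).symm
    have : x ∈ Set.range (S.orderEmbOfFin rfl) := by
      rw [Finset.range_orderEmbOfFin]; exact hx
    obtain ⟨i, hi⟩ := this
    exact ⟨i, Finset.mem_univ i, hi⟩
  rw [key, ← Fin.prod_univ_eq_prod_range]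
  exact Finset.prod_le_prod (fun _ _ => Nat.zero_le _)
    (fun i _ => hg (aux_le_orderEmbOfFin S rfl i.1 i.2))

/-- Counting multiples of `q` in an arithmetic progression coprime to `q`. -/
lemma aux_count_dvd_ap (r d N q : ℕ) (hq : 0 < q) (hcop : Nat.Coprime q d) :
    ((Finset.range N).filter (fun i => q ∣ r + i * d)).card ≤ (N - 1) / q + 1 := by
  set A := (Finset.range N).filter (fun i => q ∣ r + i * d) with hA
  rcases A.eq_empty_or_nonempty with hAe | hAne
  · simp [hAe]
  have haA := A.min'_mem hAne
  set a := A.min' hAne with ha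
  have hsub : A ⊆ (Finset.range ((N - 1) / q + 1)).image (fun t => a + t * q) := by
    intro i hi
    have hai : a ≤ i := A.min'_le i hi
    have hiN : i < N := Finset.mem_range.mp (Finset.mem_filter.mp hi).1
    have hdi : q ∣ r + i * d := (Finset.mem_filter.mp hi).2
    have hda : q ∣ r + a * d := (Finset.mem_filter.mp haA).2
    have hsub' : q ∣ (i - a) * d := by
      have : (i - a) * d = (r + i * d) - (r + a * d) := by
        rw [Nat.sub_mul]; omega
      rw [this]
      exact Nat.dvd_sub hdi hda
    have hqia : q ∣ i - a := hcop.dvd_of_dvd_mul_right hsub'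
    obtain ⟨t, ht⟩ := hqia
    have htq : t * q ≤ N - 1 := by rw [Nat.mul_comm]; omega
    have htle : t ≤ (N - 1) / q := (Nat.le_div_iff_mul_le hq).mpr htq
    refine Finset.mem_image.mpr ⟨t, Finset.mem_range.mpr (by omega), by rw [Nat.mul_comm t q]; omega⟩
  calc A.card ≤ _ := Finset.card_le_card hsub
    _ ≤ ((N - 1) / q + 1) := (Finset.card_image_le).trans (by simp)

/-- Valuation as a sum of indicators. -/
lemma aux_factorization_eq_sum (p n B : ℕ) (hp : p.Prime) (hn : n ≠ 0) (hB : n < p ^ B) :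
    n.factorization p = ∑ k ∈ Finset.Ico 1 B, (if p ^ k ∣ n then 1 else 0) := by
  set v := n.factorization p with hv
  have hvB : v < B := by
    have h1 : p ^ v ≤ n := Nat.ordProj_le p hn
    have h2 : p ^ v < p ^ B := lt_of_le_of_lt h1 hB
    exact (Nat.pow_lt_pow_iff_right hp.one_lt).mp h2
  have hind : ∀ k ∈ Finset.Ico 1 B, (if p ^ k ∣ n then (1:ℕ) else 0)
      = if k ≤ v then 1 else 0 := by
    intro k _
    congr 1
    simp only [eq_iff_iff]
    exact Nat.Prime.pow_dvd_iff_le_factorization hp hn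
  rw [Finset.sum_congr rfl hind, Finset.sum_boole]
  have : (Finset.Ico 1 B).filter (fun k => k ≤ v) = Finset.Ico 1 (v + 1) := by
    ext k
    simp only [Finset.mem_filter, Finset.mem_Ico]
    omega
  rw [this]
  simp

/-- Erdős-type elimination inequality: removing, for each prime factor of
`Π = r(r+d)⋯(r+(N-1)d)`, one term of maximal `p`-adic valuation (M removed terms
in total), the product of the first `N - M` terms is at most `(N-1)!`. -/
theorem erdos_elimination_inequality (d r N : ℕ) (hd : 0 < d) (hr : 0 < r) (hN : 0 < N)
    (hcop : Nat.gcd d r = 1)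
    (f : ℕ → ℕ)
    (hf : ∀ p ∈ (∏ i ∈ Finset.range N, (r + i * d)).primeFactors,
      f p < N ∧ ∀ j < N, padicValNat p (r + j * d) ≤ padicValNat p (r + f p * d))
    (M : ℕ)
    (hM : M = ((∏ i ∈ Finset.range N, (r + i * d)).primeFactors.image f).card) :
    ∏ i ∈ Finset.range (N - M), (r + i * d) ≤ Nat.factorial (N - 1) := by
  set Pi := ∏ i ∈ Finset.range N, (r + i * d) with hPi
  set T := Pi.primeFactors.image f with hT
  have hterm : ∀ i, r + i * d ≠ 0 := fun i => by positivity
  have hTsub : T ⊆ Finset.range N := by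
    intro j hj
    obtain ⟨p, hp, rfl⟩ := Finset.mem_image.mp hj
    exact Finset.mem_range.mpr (hf p hp).1
  set S := Finset.range N \ T with hS
  have hScard : S.card = N - M := by
    rw [hS, Finset.card_sdiff_of_subset hTsub, Finset.card_range, hM]
  have hPne : (∏ i ∈ S, (r + i * d)) ≠ 0 := by
    apply Finset.prod_ne_zero_iff.mpr; intro i _; exact hterm i
  -- Step A : the remaining product divides (N-1)!
  have hA : (∏ i ∈ S, (r + i * d)) ∣ Nat.factorial (N - 1) := by
    rw [← Nat.factorization_le_iff_dvd hPne (Nat.factorial_ne_zero _)]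
    rw [Finsupp.le_def]
    intro p
    by_cases hp : p.Prime
    swap
    · simp [Nat.factorization_eq_zero_of_not_prime _ hp]
    haveI : Fact p.Prime := ⟨hp⟩
    set B := r + (N - 1) * d with hBdef
    have hB1 : 1 ≤ B := by omega
    have hBlt : B < p ^ B :=
      lt_of_lt_of_le (Nat.lt_two_pow_self) (Nat.pow_le_pow_left hp.two_le B)
    have htermB : ∀ i < N, r + i * d < p ^ B := by
      intro i hi
      have : i * d ≤ (N - 1) * d := Nat.mul_le_mul_right d (by omega)
      omega
    -- factorization of factorial
    have hfact : (Nat.factorial (N - 1)).factorization p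
        = ∑ k ∈ Finset.Ico 1 B, (N - 1) / p ^ k := by
      rw [Nat.factorization_def _ hp]
      apply padicValNat_factorial
      rcases Nat.eq_zero_or_pos (N - 1) with h | h
      · rw [h, Nat.log_zero_right]; omega
      · have h2 : N - 1 ≤ (N - 1) * d := Nat.le_mul_of_pos_right _ hd
        exact Nat.log_lt_of_lt_pow (by omega) (by omega)
    rw [hfact]
    -- factorization of product as a double sum
    have hprodfac : (∏ i ∈ S, (r + i * d)).factorization p
        = ∑ k ∈ Finset.Ico 1 B, ((S.filter (fun i => p ^ k ∣ r + i * d)).card) := by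
      rw [Nat.factorization_prod (fun i _ => hterm i)]
      rw [Finset.sum_apply']
      have : ∀ i ∈ S, (r + i * d).factorization p
          = ∑ k ∈ Finset.Ico 1 B, (if p ^ k ∣ r + i * d then 1 else 0) := by
        intro i hi
        have hiN : i < N := by
          have := (Finset.mem_sdiff.mp hi).1; exact Finset.mem_range.mp this
        exact aux_factorization_eq_sum p _ B hp (hterm i) (htermB i hiN)
      rw [Finset.sum_congr rfl this, Finset.sum_comm]
      refine Finset.sum_congr rfl (fun k _ => ?_)
      rw [Finset.sum_boole, Nat.cast_id]
    rw [hprodfac]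
    apply Finset.sum_le_sum
    intro k hk
    have hk1 : 1 ≤ k := (Finset.mem_Ico.mp hk).1
    -- the key claim
    rcases Nat.eq_zero_or_pos ((S.filter (fun i => p ^ k ∣ r + i * d)).card) with hc | hc
    · exact hc ▸ Nat.zero_le _
    obtain ⟨i, hiSf⟩ := Finset.card_pos.mp hc
    have hiS : i ∈ S := (Finset.mem_filter.mp hiSf).1
    have hiN : i < N := Finset.mem_range.mp (Finset.mem_sdiff.mp hiS).1
    have hidvd : p ^ k ∣ r + i * d := (Finset.mem_filter.mp hiSf).2
    have hpdvd : p ∣ Pi := by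
      refine dvd_trans (dvd_trans ?_ hidvd) (Finset.dvd_prod_of_mem _ (Finset.mem_range.mpr hiN))
      exact dvd_pow_self p (by omega)
    have hPine : Pi ≠ 0 := Finset.prod_ne_zero_iff.mpr (fun i _ => hterm i)
    have hpPF : p ∈ Pi.primeFactors := Nat.mem_primeFactors.mpr ⟨hp, hpdvd, hPine⟩
    -- p does not divide d
    have hpd : ¬ p ∣ d := by
      intro hpd
      have hpk : p ∣ r + i * d :=
        dvd_trans (dvd_pow_self p (Nat.one_le_iff_ne_zero.mp hk1)) hidvd
      have hpr : p ∣ r := by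
        have h2 : p ∣ i * d + r := by rwa [Nat.add_comm] at hpk
        exact (Nat.dvd_add_right (hpd.mul_left i)).mp h2
      have h3 : p ∣ Nat.gcd d r := Nat.dvd_gcd hpd hpr
      rw [hcop] at h3
      exact hp.one_lt.ne' (Nat.dvd_one.mp h3)
    have hcoppd : Nat.Coprime (p ^ k) d := ((hp.coprime_iff_not_dvd).mpr hpd).pow_left k
    -- j = f p is removed and has p^k dividing its term
    obtain ⟨hjN, hjmax⟩ := hf p hpPF
    set j := f p with hj
    have hjdvd : p ^ k ∣ r + j * d := by
      have h1 : k ≤ (r + i * d).factorization p :=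
        (Nat.Prime.pow_dvd_iff_le_factorization hp (hterm i)).mp hidvd
      have h2 : (r + i * d).factorization p ≤ (r + j * d).factorization p := by
        rw [Nat.factorization_def _ hp, Nat.factorization_def _ hp]
        exact hjmax i hiN
      exact (Nat.Prime.pow_dvd_iff_le_factorization hp (hterm j)).mpr (le_trans h1 h2)
    have hjT : j ∈ T := Finset.mem_image.mpr ⟨p, hpPF, rfl⟩
    have hjnS : j ∉ S := fun h => (Finset.mem_sdiff.mp h).2 hjT
    have hssub : (S.filter (fun i => p ^ k ∣ r + i * d))
        ⊂ (Finset.range N).filter (fun i => p ^ k ∣ r + i * d) := by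
      refine Finset.ssubset_iff_of_subset ?_ |>.mpr ?_
      · intro x hx
        have hx1 := Finset.mem_filter.mp hx
        exact Finset.mem_filter.mpr ⟨(Finset.mem_sdiff.mp hx1.1).1, hx1.2⟩
      · exact ⟨j, Finset.mem_filter.mpr ⟨Finset.mem_range.mpr hjN, hjdvd⟩,
          fun h => hjnS (Finset.mem_filter.mp h).1⟩
    have hcount := aux_count_dvd_ap r d N (p ^ k) (Nat.pow_pos hp.pos) hcoppd
    have := Finset.card_lt_card hssub
    omega
  -- Step B : product of first N-M terms ≤ product over S
  have hB : ∏ i ∈ Finset.range (N - M), (r + i * d) ≤ ∏ i ∈ S, (r + i * d) := by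
    rw [← hScard]
    exact aux_prod_range_card_le S _ (fun a b hab =>
      Nat.add_le_add_left (Nat.mul_le_mul_right d hab) r)
  exact hB.trans (Nat.le_of_dvd (Nat.factorial_pos _) hA)
end

section
/- Let d, r be coprime positive integers and N sufficiently large. Define M as in the Erdős elimination process applied to Π = r(r+d)⋯(r+(N-1)d) (for each prime factor of Π remove one term of maximal p-adic valuation, M being the number of removed terms). Then either both d < N² and r < N², or M > N/2. -/
open Finset Nat

private lemma fact_lt_pow : ∀ m : ℕ, 2 ≤ m → m ! < (m + 1) ^ (m - 1) := by
  intro m hm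
  induction m, hm using Nat.le_induction with
  | base => norm_num
  | succ n hn ih =>
    have h1 : (n + 1)! = (n + 1) * n ! := rfl
    calc (n + 1)! = (n + 1) * n ! := rfl
      _ < (n + 1) * (n + 1) ^ (n - 1) := by
          have hpos : 0 < n + 1 := by omega
          exact Nat.mul_lt_mul_of_le_of_lt (le_refl _) ih hpos
      _ = (n + 1) ^ (n - 1 + 1) := (pow_succ (n+1) (n-1)).symm ▸ (mul_comm (n+1) _ ▸ rfl)
      _ = (n + 1) ^ n := by congr 1; omega
      _ ≤ (n + 2) ^ n := Nat.pow_le_pow_left (by omega) _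
      _ = (n + 2) ^ (n + 1 - 1) := by norm_num

/-- The number of `i < N` with `p^k ∣ r + i*d` is at most `(N-1)/p^k + 1` when `p ∤ d`. -/
private lemma count_le {p k d r N : ℕ} (hp : p.Prime) (hd : ¬ p ∣ d) :
    ((Finset.range N).filter (fun i => p ^ k ∣ r + i * d)).card ≤ (N - 1) / p ^ k + 1 := by
  have hq : 0 < p ^ k := Nat.pow_pos hp.pos
  have key : ∀ i ∈ (Finset.range N).filter (fun i => p ^ k ∣ r + i * d),
      ∀ i' ∈ (Finset.range N).filter (fun i => p ^ k ∣ r + i * d),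
      i < i' → i / p ^ k < i' / p ^ k := by
    intro i hi i' hi' hlt
    simp only [Finset.mem_filter, Finset.mem_range] at hi hi'
    have hdvd : p ^ k ∣ (r + i' * d) - (r + i * d) := Nat.dvd_sub hi'.2 hi.2
    have heq : (r + i' * d) - (r + i * d) = (i' - i) * d := by
      rw [Nat.add_sub_add_left, Nat.sub_mul]
    rw [heq] at hdvd
    have hcop : Nat.Coprime (p ^ k) d := (hp.coprime_iff_not_dvd.mpr hd).pow_left k
    have hdd : p ^ k ∣ i' - i := hcop.dvd_of_dvd_mul_right hdvd
    have hge : i + p ^ k ≤ i' := by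
      have := Nat.le_of_dvd (by omega) hdd
      omega
    calc i / p ^ k < i / p ^ k + 1 := Nat.lt_succ_self _
      _ = (i + p ^ k) / p ^ k := (Nat.add_div_right i hq).symm
      _ ≤ i' / p ^ k := Nat.div_le_div_right hge
  have hinj : Set.InjOn (fun i => i / p ^ k)
      ((Finset.range N).filter (fun i => p ^ k ∣ r + i * d)) := by
    intro a ha b hb hab
    by_contra hne
    rcases Nat.lt_or_ge a b with h | h
    · exact absurd hab (Nat.ne_of_lt (key a ha b hb h))
    · have : b < a := by omega
      exact absurd hab.symm (Nat.ne_of_lt (key b hb a ha this))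
  have hmaps : ∀ i ∈ (Finset.range N).filter (fun i => p ^ k ∣ r + i * d),
      i / p ^ k ∈ Finset.range ((N - 1) / p ^ k + 1) := by
    intro i hi
    simp only [Finset.mem_filter, Finset.mem_range] at hi ⊢
    have : i ≤ N - 1 := by omega
    have := Nat.div_le_div_right (c := p ^ k) this
    omega
  have := Finset.card_le_card_of_injOn _ hmaps hinj
  simpa using this

/-- Key per-prime valuation bound: after removing the index of maximal valuation,
the total `p`-valuation of the remaining terms is at most that of `(N-1)!`. -/
private lemma key_sum {p N d r i₀ : ℕ} (hp : p.Prime) (hd : ¬ p ∣ d) (hr : 0 < r)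
    (hi₀ : i₀ < N)
    (hmax : ∀ j < N, padicValNat p (r + j * d) ≤ padicValNat p (r + i₀ * d))
    {T : Finset ℕ} (hT : T ⊆ (Finset.range N).erase i₀) :
    ∑ i ∈ T, padicValNat p (r + i * d) ≤ padicValNat p (N - 1)! := by
  haveI : Fact p.Prime := ⟨hp⟩
  have hN : 1 ≤ N := by omega
  set v := padicValNat p (r + i₀ * d) with hv
  set b := v + N with hb
  have hterm_pos : ∀ i : ℕ, 0 < r + i * d := fun i => lt_of_lt_of_le hr (Nat.le_add_right _ _)
  have hpdvd_iff : ∀ m : ℕ, m ≠ 0 → ∀ k : ℕ, (p ^ k ∣ m ↔ k ≤ padicValNat p m) := by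
    intro m hm k
    rw [← Nat.factorization_def m hp]
    exact hp.pow_dvd_iff_le_factorization hm
  have hlog : Nat.log p (N - 1) < b := by
    have := Nat.log_le_self p (N - 1)
    omega
  rw [padicValNat_factorial hlog]
  have hterm : ∀ i ∈ T, padicValNat p (r + i * d)
      = ((Finset.Ico 1 b).filter (fun k => p ^ k ∣ r + i * d)).card := by
    intro i hiT
    have hiN : i < N := Finset.mem_range.mp (Finset.mem_of_mem_erase (hT hiT))
    have hvle : padicValNat p (r + i * d) ≤ v := hmax i hiN
    have : (Finset.Ico 1 b).filter (fun k => p ^ k ∣ r + i * d)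
        = Finset.Ico 1 (padicValNat p (r + i * d) + 1) := by
      ext k
      simp only [Finset.mem_filter, Finset.mem_Ico]
      constructor
      · rintro ⟨⟨h1, h2⟩, hdvd⟩
        exact ⟨h1, by
          have := (hpdvd_iff _ (hterm_pos i).ne' k).mp hdvd
          omega⟩
      · rintro ⟨h1, h2⟩
        refine ⟨⟨h1, by omega⟩, (hpdvd_iff _ (hterm_pos i).ne' k).mpr (by omega)⟩
    rw [this, Nat.card_Ico]
    omega
  calc ∑ i ∈ T, padicValNat p (r + i * d)
      = ∑ i ∈ T, ((Finset.Ico 1 b).filter (fun k => p ^ k ∣ r + i * d)).card :=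
        Finset.sum_congr rfl hterm
    _ = ∑ k ∈ Finset.Ico 1 b, (T.filter (fun i => p ^ k ∣ r + i * d)).card := by
        simp_rw [Finset.card_filter]
        exact Finset.sum_comm
    _ ≤ ∑ k ∈ Finset.Ico 1 b, (N - 1) / p ^ k := by
        apply Finset.sum_le_sum
        intro k hk
        by_cases hkv : k ≤ v
        · -- i₀ is a solution, and it has been removed
          have hi₀dvd : p ^ k ∣ r + i₀ * d :=
            (hpdvd_iff _ (hterm_pos i₀).ne' k).mpr hkv
          have hsub : T.filter (fun i => p ^ k ∣ r + i * d)
              ⊆ ((Finset.range N).filter (fun i => p ^ k ∣ r + i * d)).erase i₀ := by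
            intro x hx
            simp only [Finset.mem_filter] at hx
            have hx' := hT hx.1
            simp only [Finset.mem_erase] at hx' ⊢
            exact ⟨hx'.1, Finset.mem_filter.mpr ⟨hx'.2, hx.2⟩⟩
          have hmem : i₀ ∈ (Finset.range N).filter (fun i => p ^ k ∣ r + i * d) :=
            Finset.mem_filter.mpr ⟨Finset.mem_range.mpr hi₀, hi₀dvd⟩
          have h1 := Finset.card_le_card hsub
          rw [Finset.card_erase_of_mem hmem] at h1
          have h2 := count_le (p := p) (k := k) (d := d) (r := r) (N := N) hp hd
          have h3 : 1 ≤ ((Finset.range N).filter (fun i => p ^ k ∣ r + i * d)).card :=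
            Finset.card_pos.mpr ⟨i₀, hmem⟩
          omega
        · -- no solutions at all
          have : T.filter (fun i => p ^ k ∣ r + i * d) = ∅ := by
            apply Finset.eq_empty_of_forall_notMem
            intro x hx
            simp only [Finset.mem_filter] at hx
            have hxN : x < N := Finset.mem_range.mp (Finset.mem_of_mem_erase (hT hx.1))
            have := (hpdvd_iff _ (hterm_pos x).ne' k).mp hx.2
            have := hmax x hxN
            omega
          simp [this]

/-- For sufficiently large `N`: either both `d < N²` and `r < N²`, or the number `M`
of terms removed in the Erdős elimination process satisfies `M > N/2`. -/
theorem small_params_or_many_removed :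
    ∃ N₀ : ℕ, ∀ N ≥ N₀, ∀ d r : ℕ, 0 < d → 0 < r → Nat.gcd d r = 1 →
      ∀ f : ℕ → ℕ,
        (∀ p ∈ (∏ i ∈ Finset.range N, (r + i * d)).primeFactors,
          f p < N ∧ ∀ j < N, padicValNat p (r + j * d) ≤ padicValNat p (r + f p * d)) →
        ∀ M : ℕ, M = ((∏ i ∈ Finset.range N, (r + i * d)).primeFactors.image f).card →
          (d < N ^ 2 ∧ r < N ^ 2) ∨ N < 2 * M := by
  use 100
  intro N hN d r hd0 hr0 hgcd f hf M hM
  by_cases hsmall : d < N ^ 2 ∧ r < N ^ 2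
  · exact Or.inl hsmall
  right
  by_contra hMle
  push_neg at hMle
  set P := ∏ i ∈ Finset.range N, (r + i * d) with hP
  set S := P.primeFactors.image f with hS
  have hterm_pos : ∀ i : ℕ, 0 < r + i * d := fun i => lt_of_lt_of_le hr0 (Nat.le_add_right _ _)
  have hP_pos : 0 < P := Finset.prod_pos (fun i _ => hterm_pos i)
  have hS_sub : S ⊆ Finset.range N := by
    intro x hx
    simp only [hS, Finset.mem_image] at hx
    obtain ⟨p, hp, rfl⟩ := hx
    exact Finset.mem_range.mpr (hf p hp).1
  set T := Finset.range N \ S with hT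
  have hTcard : T.card = N - M := by
    rw [hT, Finset.card_sdiff_of_subset hS_sub, Finset.card_range, hM]
  have hMN : M ≤ N := by
    rw [hM]
    calc S.card ≤ (Finset.range N).card := Finset.card_le_card hS_sub
      _ = N := Finset.card_range N
  -- divisibility of the remaining product into (N-1)!
  have hdvd : (∏ i ∈ T, (r + i * d)) ∣ (N - 1)! := by
    have hprod_ne : (∏ i ∈ T, (r + i * d)) ≠ 0 :=
      (Finset.prod_pos (fun i _ => hterm_pos i)).ne'
    rw [← Nat.factorization_le_iff_dvd hprod_ne (Nat.factorial_ne_zero _)]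
    intro p
    by_cases hp : p.Prime
    · by_cases hpd : p ∣ ∏ i ∈ T, (r + i * d)
      · have hpP : p ∣ P := hpd.trans (Finset.prod_dvd_prod_of_subset T (Finset.range N) _
          Finset.sdiff_subset)
        have hpF : p ∈ P.primeFactors := Nat.mem_primeFactors.mpr ⟨hp, hpP, hP_pos.ne'⟩
        obtain ⟨hfp, hmax⟩ := hf p hpF
        have hpnd : ¬ p ∣ d := by
          intro h
          obtain ⟨i, hiT, hpi⟩ := (hp.prime.dvd_finset_prod_iff _).mp hpP
          have hpr : p ∣ r := by
            have h2 : p ∣ (r + i * d) - i * d := Nat.dvd_sub hpi (h.mul_left i)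
            simpa using h2
          have : p ∣ 1 := hgcd ▸ Nat.dvd_gcd h hpr
          exact hp.one_lt.ne' (Nat.dvd_one.mp this)
        rw [Nat.factorization_prod (fun i _ => (hterm_pos i).ne')]
        rw [Finsupp.finset_sum_apply]
        simp_rw [Nat.factorization_def _ hp]
        apply key_sum hp hpnd hr0 hfp hmax
        intro x hx
        rw [hT, Finset.mem_sdiff] at hx
        refine Finset.mem_erase.mpr ⟨?_, hx.1⟩
        intro hxeq
        exact hx.2 (hxeq ▸ Finset.mem_image_of_mem f hpF)
      · simp [Nat.factorization_eq_zero_of_not_dvd hpd]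
    · simp [Nat.factorization_eq_zero_of_not_prime _ hp]
  have hle : (∏ i ∈ T, (r + i * d)) ≤ (N - 1)! :=
    Nat.le_of_dvd (Nat.factorial_pos _) hdvd
  have hfactlt : (N - 1)! < N ^ (N - 2) := by
    have h := fact_lt_pow (N - 1) (by omega)
    have e1 : N - 1 + 1 = N := by omega
    have e2 : N - 1 - 1 = N - 2 := by omega
    rwa [e1, e2] at h
  rcases (not_and_or.mp hsmall) with hd2 | hr2
  · -- d ≥ N^2
    push_neg at hd2
    have hcard_erase : N - M - 1 ≤ (T.erase 0).card := by
      have := Finset.pred_card_le_card_erase (s := T) (a := 0)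
      omega
    have h1 : N ^ (N - 2) ≤ ∏ i ∈ T, (r + i * d) := by
      calc N ^ (N - 2) ≤ (N ^ 2) ^ (T.erase 0).card := by
            rw [← pow_mul]
            exact Nat.pow_le_pow_right (by omega) (by omega)
        _ ≤ d ^ (T.erase 0).card := Nat.pow_le_pow_left hd2 _
        _ = ∏ _i ∈ T.erase 0, d := (Finset.prod_const d).symm
        _ ≤ ∏ i ∈ T.erase 0, (r + i * d) := by
            apply Finset.prod_le_prod
            · intro i _; exact Nat.zero_le _
            · intro i hi
              have hi0 : i ≠ 0 := Finset.ne_of_mem_erase hi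
              have : d ≤ i * d := Nat.le_mul_of_pos_left d (by omega)
              omega
        _ ≤ ∏ i ∈ T, (r + i * d) := by
            apply Finset.prod_le_prod_of_subset_of_one_le' (Finset.erase_subset _ _)
            intro i _ _
            exact hterm_pos i
    have : N ^ (N - 2) < N ^ (N - 2) := lt_of_le_of_lt (h1.trans hle) hfactlt
    exact absurd this (lt_irrefl _)
  · -- r ≥ N^2
    push_neg at hr2
    have h1 : N ^ (N - 2) ≤ ∏ i ∈ T, (r + i * d) := by
      calc N ^ (N - 2) ≤ (N ^ 2) ^ T.card := by
            rw [← pow_mul]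
            exact Nat.pow_le_pow_right (by omega) (by omega)
        _ ≤ r ^ T.card := Nat.pow_le_pow_left hr2 _
        _ = ∏ _i ∈ T, r := (Finset.prod_const r).symm
        _ ≤ ∏ i ∈ T, (r + i * d) := by
            apply Finset.prod_le_prod
            · intro i _; exact Nat.zero_le _
            · intro i _; exact Nat.le_add_right _ _
    have : N ^ (N - 2) < N ^ (N - 2) := lt_of_le_of_lt (h1.trans hle) hfactlt
    exact absurd this (lt_irrefl _)
end

section
/- Let B be a finite set of positive integers and A ⊆ B·B a finite set such that there exist distinct primes p_1, …, p_M and distinct elements a_1, …, a_M ∈ A with the property that p_i divides a_i but p_i does not divide any other element of A. Then |B| ≥ M/2. -/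
open scoped Pointwise

/-- If `A ⊆ B·B` and there are `M` distinct primes each dividing exactly one of `M`
distinct elements of `A`, then `|B| ≥ M/2`. -/
theorem card_ge_of_unique_prime_divisors (B A : Finset ℕ) (hBpos : ∀ b ∈ B, 0 < b)
    (hA : A ⊆ B * B)
    (M : ℕ) (p a : Fin M → ℕ)
    (hp : ∀ i, (p i).Prime) (hpinj : Function.Injective p)
    (hainj : Function.Injective a) (haA : ∀ i, a i ∈ A)
    (hdvd : ∀ i, p i ∣ a i)
    (hnot : ∀ i, ∀ x ∈ A, x ≠ a i → ¬ p i ∣ x) :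
    M ≤ 2 * B.card := by
  have hex : ∀ i : Fin M, ∃ b, b ∈ B ∧ p i ∣ b ∧ b ∣ a i := by
    intro i
    obtain ⟨b₁, hb₁, b₂, hb₂, heq⟩ := Finset.mem_mul.mp (hA (haA i))
    have hdv : p i ∣ b₁ * b₂ := heq ▸ hdvd i
    rcases (hp i).dvd_mul.mp hdv with h | h
    · exact ⟨b₁, hb₁, h, heq ▸ dvd_mul_right b₁ b₂⟩
    · exact ⟨b₂, hb₂, h, heq ▸ dvd_mul_left b₂ b₁⟩
  choose f hfB hfp hfa using hex
  have hinj : Function.Injective f := by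
    intro i j hij
    by_contra hne
    have hpj : p j ∣ a i := (hij ▸ hfp j).trans (hfa i)
    exact hnot j (a i) (haA i) (fun h => hne (hainj h)) hpj
  have : M ≤ B.card := by
    have := Finset.card_le_card_of_injOn (s := Finset.univ) f (fun i _ => hfB i)
      (Function.Injective.injOn hinj)
    simpa using this
  omega
end

section
/- Let A be a set of N integers, let g = gcd of all elements of A, and suppose a/g < N^{K₁} for every a ∈ A. Suppose A ⊆ B·B for some finite set of integers B, and that the product ∏_{a∈A} (a/g) has at least M distinct prime factors exceeding K₂·N. Then |B| ≥ c(K₁,K₂)·M for some constant c(K₁,K₂) > 0 depending only on K₁ and K₂. -/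
open scoped Pointwise


open Finset

lemma count_large_primes (K₁ K₂ : ℝ) (hK₁ : 0 < K₁) (hK₂ : 0 < K₂) :
    ∃ C : ℝ, 1 ≤ C ∧ ∀ N n : ℕ, 2 ≤ N → 0 < n → (n : ℝ) < (N : ℝ) ^ K₁ →
      (((n.primeFactors).filter (fun q : ℕ => K₂ * N < (q : ℝ))).card : ℝ) ≤ C := by
  classical
  set N₁ : ℝ := max 4 (K₂⁻¹ ^ 2) with hN₁
  have hN₁4 : (4:ℝ) ≤ N₁ := le_max_left _ _
  have hlog2 : (0:ℝ) < Real.log 2 := Real.log_pos (by norm_num)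
  refine ⟨max (2 * K₁) (K₁ * Real.log N₁ / Real.log 2) + 1, ?_, ?_⟩
  · have h1 : 0 ≤ K₁ * Real.log N₁ / Real.log 2 := by
      have : (0:ℝ) ≤ Real.log N₁ := Real.log_nonneg (by linarith)
      positivity
    nlinarith [le_max_right (2*K₁) (K₁ * Real.log N₁ / Real.log 2)]
  intro N n hN hn hlt
  set F := (n.primeFactors).filter (fun q : ℕ => K₂ * N < (q : ℝ)) with hF
  set k := F.card with hk
  set L : ℝ := max 2 (K₂ * N) with hL
  have hL2 : (2:ℝ) ≤ L := le_max_left _ _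
  have hL1 : (1:ℝ) < L := by linarith
  have hdvd : ∏ q ∈ F, q ∣ n := dvd_trans (Finset.prod_dvd_prod_of_subset F n.primeFactors id
      (filter_subset _ _)) (Nat.prod_primeFactors_dvd n)
  have hprodle : ((∏ q ∈ F, q : ℕ) : ℝ) ≤ (n : ℝ) := by
    exact_mod_cast Nat.le_of_dvd hn hdvd
  have hLk : L ^ k ≤ ((∏ q ∈ F, q : ℕ) : ℝ) := by
    rw [Nat.cast_prod, ← Finset.prod_const]
    refine Finset.prod_le_prod (fun i _ => by positivity) ?_
    intro q hq
    rw [hF, mem_filter] at hq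
    have hq2 : 2 ≤ q := (Nat.prime_of_mem_primeFactors hq.1).two_le
    exact max_le (by exact_mod_cast hq2) (le_of_lt hq.2)
  have hkey : L ^ k < (N : ℝ) ^ K₁ := lt_of_le_of_lt (hLk.trans hprodle) hlt
  have hNpos : (0:ℝ) < N := by positivity
  have hN2 : (2:ℝ) ≤ N := by exact_mod_cast hN
  have hlogN : 0 < Real.log N := Real.log_pos (by linarith)
  have hlogL : 0 < Real.log L := Real.log_pos hL1
  have hlog : (k : ℝ) * Real.log L < K₁ * Real.log N := by
    have := Real.log_lt_log (by positivity : (0:ℝ) < L ^ k) hkey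
    rwa [Real.log_pow, Real.log_rpow hNpos] at this
  by_cases hcase : (N : ℝ) ≤ N₁
  · have h1 : (k : ℝ) * Real.log 2 ≤ (k : ℝ) * Real.log L :=
      mul_le_mul_of_nonneg_left (Real.log_le_log (by norm_num) hL2) (by positivity)
    have h2 : Real.log N ≤ Real.log N₁ := Real.log_le_log hNpos hcase
    have h3 : (k : ℝ) ≤ K₁ * Real.log N₁ / Real.log 2 := by
      rw [le_div_iff₀ hlog2]
      nlinarith
    have := le_max_right (2 * K₁) (K₁ * Real.log N₁ / Real.log 2)
    linarith
  · push_neg at hcase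
    have hNK : (K₂⁻¹)^2 ≤ (N:ℝ) := le_of_lt (lt_of_le_of_lt (le_max_right _ _) hcase)
    have hsqrt : Real.sqrt N ≤ K₂ * N := by
      have hKs : K₂⁻¹ ≤ Real.sqrt N := by
        rw [show (K₂⁻¹ : ℝ) = Real.sqrt (K₂⁻¹^2) from (Real.sqrt_sq (by positivity)).symm]
        exact Real.sqrt_le_sqrt hNK
      have h1 : (1:ℝ) ≤ K₂ * Real.sqrt N := by
        calc (1:ℝ) = K₂ * K₂⁻¹ := by field_simp
          _ ≤ K₂ * Real.sqrt N := mul_le_mul_of_nonneg_left hKs (le_of_lt hK₂)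
      have h2 : Real.sqrt N * Real.sqrt N = (N:ℝ) := Real.mul_self_sqrt (le_of_lt hNpos)
      nlinarith [Real.sqrt_nonneg (N:ℝ)]
    have hlogL2 : Real.log N / 2 ≤ Real.log L := by
      have h := Real.log_le_log (Real.sqrt_pos.2 hNpos) (le_trans hsqrt (le_max_right 2 (K₂ * (N:ℝ))))
      rwa [Real.log_sqrt (le_of_lt hNpos)] at h
    have hk2 : (k:ℝ) * (Real.log N / 2) ≤ (k:ℝ) * Real.log L :=
      mul_le_mul_of_nonneg_left hlogL2 (by positivity)
    have hfin : (k:ℝ) ≤ 2 * K₁ := by nlinarith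
    have := le_max_left (2 * K₁) (K₁ * Real.log N₁ / Real.log 2)
    linarith


open Finset

lemma exists_small_generating (A B : Finset ℕ) (l r : ℕ → ℕ)
    (h0 : ∀ a ∈ A, 0 < a)
    (hlr : ∀ a ∈ A, l a ∈ B ∧ r a ∈ B ∧ l a * r a = a) :
    ∃ S : Finset ℕ, S ⊆ A ∧ S.card ≤ 2 * B.card ∧
      ∀ a ∈ A, ∃ c : ℕ → ℚ, (∑ e ∈ S, c e) = 1 ∧
        ∀ q : ℕ, (a.factorization q : ℚ) = ∑ e ∈ S, c e * (e.factorization q) := by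
  classical
  set u : ℕ → ((ℕ ⊕ ℕ) →₀ ℚ) := fun a =>
    Finsupp.single (Sum.inl (l a)) 1 + Finsupp.single (Sum.inr (r a)) 1 with hu
  -- u is injective on A
  have huinj : ∀ a ∈ A, ∀ a' ∈ A, u a = u a' → a = a' := by
    intro a ha a' ha' h
    have h1 := DFunLike.congr_fun h (Sum.inl (l a))
    have h2 := DFunLike.congr_fun h (Sum.inr (r a))
    simp only [hu, Finsupp.add_apply, Finsupp.single_apply] at h1 h2
    by_cases e1 : l a' = l a
    · by_cases e2 : r a' = r a
      · rw [← (hlr a ha).2.2, ← (hlr a' ha').2.2, e1, e2]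
      · simp [e2] at h2
    · simp [e1] at h1
  obtain ⟨t, hts, hspan, hli⟩ := exists_linearIndependent ℚ (u '' (A : Set ℕ))
  have htfin : t.Finite := Set.Finite.subset (A.finite_toSet.image u) hts
  haveI := htfin.fintype
  set S : Finset ℕ := A.filter (fun a => u a ∈ t) with hS
  have hSsub : S ⊆ A := filter_subset _ _
  have himg : S.image u = t.toFinset := by
    ext v
    simp only [mem_image, Set.mem_toFinset, hS, mem_filter]
    constructor
    · rintro ⟨a, ⟨_, h2⟩, rfl⟩; exact h2
    · intro hv
      obtain ⟨a, ha, rfl⟩ := hts hv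
      exact ⟨a, ⟨ha, hv⟩, rfl⟩
  have hinjS : Set.InjOn u S := fun a ha a' ha' h =>
    huinj a (hSsub ha) a' (hSsub ha') h
  have hScard : S.card = t.toFinset.card := by
    rw [← himg, Finset.card_image_of_injOn hinjS]
  -- the finite generating set of singles
  set Jv : Finset ((ℕ ⊕ ℕ) →₀ ℚ) := (B.image (fun b => Finsupp.single (Sum.inl b) (1:ℚ))) ∪
      (B.image (fun b => Finsupp.single (Sum.inr b) (1:ℚ))) with hJv
  have hJvcard : Jv.card ≤ 2 * B.card := by
    calc Jv.card ≤ _ + _ := card_union_le _ _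
      _ ≤ 2 * B.card := by
          have g1 := Finset.card_image_le (s := B) (f := fun b => (Finsupp.single (Sum.inl b) (1:ℚ) : (ℕ ⊕ ℕ) →₀ ℚ))
          have g2 := Finset.card_image_le (s := B) (f := fun b => (Finsupp.single (Sum.inr b) (1:ℚ) : (ℕ ⊕ ℕ) →₀ ℚ))
          omega
  have huJ : ∀ a ∈ A, u a ∈ Submodule.span ℚ (Jv : Set ((ℕ ⊕ ℕ) →₀ ℚ)) := by
    intro a ha
    apply Submodule.add_mem
    · apply Submodule.subset_span
      simp only [hJv, coe_union, Set.mem_union, coe_image, Set.mem_image]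
      exact Or.inl ⟨l a, (hlr a ha).1, rfl⟩
    · apply Submodule.subset_span
      simp only [hJv, coe_union, Set.mem_union, coe_image, Set.mem_image]
      exact Or.inr ⟨r a, (hlr a ha).2.1, rfl⟩
  have hspanle : Submodule.span ℚ t ≤ Submodule.span ℚ (Jv : Set ((ℕ ⊕ ℕ) →₀ ℚ)) := by
    rw [hspan, Submodule.span_le]
    rintro v ⟨a, ha, rfl⟩
    exact huJ a ha
  haveI : Module.Finite ℚ (Submodule.span ℚ (Jv : Set ((ℕ ⊕ ℕ) →₀ ℚ))) :=
    Module.Finite.span_of_finite ℚ (Jv.finite_toSet)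
  have htcard : t.toFinset.card ≤ 2 * B.card := by
    have h1 : Module.finrank ℚ (Submodule.span ℚ t) = t.toFinset.card :=
      finrank_span_set_eq_card hli
    have h2 : Module.finrank ℚ (Submodule.span ℚ t) ≤
        Module.finrank ℚ (Submodule.span ℚ (Jv : Set ((ℕ ⊕ ℕ) →₀ ℚ))) :=
      Submodule.finrank_mono hspanle
    have h3 : Module.finrank ℚ (Submodule.span ℚ (Jv : Set ((ℕ ⊕ ℕ) →₀ ℚ))) ≤ Jv.card :=
      finrank_span_finset_le_card Jv
    omega
  refine ⟨S, hSsub, by omega, ?_⟩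
  intro a ha
  have hmem : u a ∈ Submodule.span ℚ ((S.image u : Finset ((ℕ ⊕ ℕ) →₀ ℚ)) : Set ((ℕ ⊕ ℕ) →₀ ℚ)) := by
    rw [himg, Set.coe_toFinset, hspan]
    exact Submodule.subset_span ⟨a, ha, rfl⟩
  obtain ⟨f, -, hf⟩ := Submodule.mem_span_finset.mp hmem
  have hsum : ∑ e ∈ S, f (u e) • u e = u a := by
    rw [← hf, Finset.sum_image (fun x hx y hy h => hinjS hx hy h)]
  refine ⟨fun e => f (u e), ?_, ?_⟩
  · -- apply the "sum of coordinates" functional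
    set T : ((ℕ ⊕ ℕ) →₀ ℚ) →ₗ[ℚ] ℚ := Finsupp.linearCombination ℚ (fun _ => (1:ℚ)) with hT
    have hTu : ∀ b : ℕ, T (u b) = 2 := by
      intro b
      simp [hT, hu, Finsupp.linearCombination_single, map_add]
      norm_num
    have := congrArg T hsum
    rw [map_sum] at this
    simp only [map_smul, hTu, smul_eq_mul] at this
    have : ∑ e ∈ S, f (u e) * 2 = 2 := this
    rw [← Finset.sum_mul] at this
    linarith
  · intro q
    set w : (ℕ ⊕ ℕ) → ℚ := Sum.elim (fun b => (b.factorization q : ℚ))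
        (fun b => (b.factorization q : ℚ)) with hw
    set Wq : ((ℕ ⊕ ℕ) →₀ ℚ) →ₗ[ℚ] ℚ := Finsupp.linearCombination ℚ w with hW
    have hWu : ∀ b ∈ A, Wq (u b) = (b.factorization q : ℚ) := by
      intro b hb
      have hbl : l b ≠ 0 := by
        intro h
        have h' := (hlr b hb).2.2
        rw [h, zero_mul] at h'
        exact (h0 b hb).ne' h'.symm
      have hbr : r b ≠ 0 := by
        intro h
        have h' := (hlr b hb).2.2
        rw [h, mul_zero] at h'
        exact (h0 b hb).ne' h'.symm
      have hfact : b.factorization q = (l b).factorization q + (r b).factorization q := by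
        conv_lhs => rw [← (hlr b hb).2.2]
        rw [Nat.factorization_mul hbl hbr]
        rfl
      simp only [hW, hu, map_add, Finsupp.linearCombination_single, hw, Sum.elim_inl,
        Sum.elim_inr, one_smul, hfact]
      push_cast
      ring
    have heq := congrArg Wq hsum
    rw [map_sum] at heq
    simp only [map_smul, smul_eq_mul] at heq
    calc (a.factorization q : ℚ) = Wq (u a) := (hWu a ha).symm
      _ = ∑ e ∈ S, f (u e) * Wq (u e) := heq.symm
      _ = ∑ e ∈ S, f (u e) * (e.factorization q) :=
          Finset.sum_congr rfl (fun e he => by rw [hWu e (hSsub he)])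

open Classical in
/-- If each `a/gcd(A)` is at most `N^{K₁}` and the product `∏ a/gcd(A)` has at least `M`
distinct prime factors exceeding `K₂·N`, and `A ⊆ B·B`, then `|B| ≥ c(K₁,K₂)·M`. -/
theorem card_lower_bound_of_many_large_primes (K₁ K₂ : ℝ) (hK₁ : 0 < K₁) (hK₂ : 0 < K₂) :
    ∃ c : ℝ, 0 < c ∧ ∀ (A B : Finset ℕ) (M : ℕ), (∀ a ∈ A, 0 < a) →
      (∀ a ∈ A, ((a / A.gcd id : ℕ) : ℝ) < (A.card : ℝ) ^ K₁) →
      A ⊆ B * B →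
      M ≤ (((∏ a ∈ A, a / A.gcd id).primeFactors).filter
            (fun q => K₂ * A.card < (q : ℝ))).card →
      c * M ≤ (B.card : ℝ) := by
  obtain ⟨C, hC1, hCbound⟩ := count_large_primes K₁ K₂ hK₁ hK₂
  have hCpos : (0:ℝ) < 2 * C := by linarith
  refine ⟨(2*C)⁻¹, by positivity, ?_⟩
  intro A B M h₀ h₂ hAB hM
  have hM' : M ≤ (((∏ a ∈ A, a / A.gcd id).primeFactors).filter
      (fun q : ℕ => K₂ * A.card < (q : ℝ))).card := by
    set s : Finset ℕ := (∏ a ∈ A, a / A.gcd id).primeFactors with hs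
    have hb := congrFun (congrFun (Finset.bind_def (α := ℝ) (β := ℕ)) s)
        (fun a : ℕ => (pure ((a : ℕ) : ℝ) : Finset ℝ))
    rw [hb] at hM
    have hsing : (s.sup fun a : ℕ => (pure ((a:ℕ):ℝ) : Finset ℝ))
        = s.image (fun a : ℕ => (a : ℝ)) := by
      rw [Finset.pure_def]
      exact Finset.sup_singleton_apply s _
    rw [hsing] at hM
    rw [Finset.filter_image] at hM
    rwa [Finset.card_image_of_injective _ Nat.cast_injective] at hM
  clear hM
  by_cases hA : A = ∅
  · subst hA
    have h0' : M = 0 := by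
      have h' := hM'
      simp only [Finset.prod_empty, Nat.primeFactors_one, Finset.filter_empty,
        Finset.card_empty] at h'
      omega
    rw [h0', Nat.cast_zero, mul_zero]
    positivity
  by_cases hcard1 : A.card = 1
  · exfalso
    obtain ⟨a, rfl⟩ := Finset.card_eq_one.mp hcard1
    have ha : a ∈ ({a} : Finset ℕ) := Finset.mem_singleton_self a
    have h := h₂ a ha
    have hgc : ({a} : Finset ℕ).gcd id = a := by simp
    rw [hgc, Nat.div_self (h₀ a ha), Finset.card_singleton] at h
    simp only [Nat.cast_one, Real.one_rpow] at h
    norm_num at h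
  set g := A.gcd id with hg
  -- now N ≥ 2
  have hN2 : 2 ≤ A.card := by
    have h1 : 0 < A.card := Finset.card_pos.mpr (Finset.nonempty_iff_ne_empty.mpr hA)
    omega
  obtain ⟨a0, ha0⟩ := Finset.nonempty_iff_ne_empty.mpr hA
  have hgdvd : ∀ a ∈ A, g ∣ a := fun a ha => Finset.gcd_dvd ha
  have hgpos : 0 < g := by
    rcases Nat.eq_zero_or_pos g with h | h
    · exfalso
      have := hgdvd a0 ha0
      rw [h, zero_dvd_iff] at this
      exact (h₀ a0 ha0).ne' this
    · exact h
  have hdivpos : ∀ a ∈ A, 0 < a / g :=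
    fun a ha => Nat.div_pos (Nat.le_of_dvd (h₀ a ha) (hgdvd a ha)) hgpos
  have hfacts : ∀ a ∈ A, ∃ b ∈ B, ∃ c ∈ B, b * c = a := fun a ha => Finset.mem_mul.mp (hAB ha)
  choose! l hl rr hrr hmul using hfacts
  obtain ⟨S, hSA, hScard, hrep⟩ := exists_small_generating A B l rr h₀
    (fun a ha => ⟨hl a ha, hrr a ha, hmul a ha⟩)
  have hfactsplit : ∀ x ∈ A, ∀ q : ℕ,
      x.factorization q = g.factorization q + (x / g).factorization q := by
    intro x hx q
    conv_lhs => rw [← Nat.mul_div_cancel' (hgdvd x hx)]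
    rw [Nat.factorization_mul hgpos.ne' (hdivpos x hx).ne']
    rfl
  -- key subset claim
  have hsub : (((∏ a ∈ A, a / g).primeFactors).filter
        (fun q : ℕ => K₂ * A.card < (q : ℝ))) ⊆
      S.biUnion (fun e => ((e / g).primeFactors).filter
        (fun q : ℕ => K₂ * A.card < (q : ℝ))) := by
    intro q hq
    rw [Finset.mem_filter] at hq
    obtain ⟨hq1, hq2⟩ := hq
    have hqp : q.Prime := Nat.prime_of_mem_primeFactors hq1
    have hqdvd : q ∣ ∏ a ∈ A, a / g := Nat.dvd_of_mem_primeFactors hq1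
    obtain ⟨a, ha, hqa⟩ := hqp.prime.exists_mem_finset_dvd hqdvd
    have hexe : ∃ e ∈ S, q ∣ e / g := by
      by_contra hcon
      push_neg at hcon
      obtain ⟨c, hc1, hc2⟩ := hrep a ha
      have heq : ∀ e ∈ S, (e.factorization q : ℚ) = (g.factorization q : ℚ) := by
        intro e he
        rw [hfactsplit e (hSA he), Nat.factorization_eq_zero_of_not_dvd (hcon e he)]
        push_cast
        ring
      have h1 : (a.factorization q : ℚ) = (g.factorization q : ℚ) := by
        rw [hc2 q]
        rw [Finset.sum_congr rfl (fun e he => by rw [heq e he])]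
        rw [← Finset.sum_mul, hc1, one_mul]
      have h2 : 1 ≤ (a / g).factorization q :=
        (hqp.dvd_iff_one_le_factorization (hdivpos a ha).ne').mp hqa
      rw [hfactsplit a ha] at h1
      push_cast at h1
      have : ((a / g).factorization q : ℚ) = 0 := by linarith
      rw [Nat.cast_eq_zero] at this
      omega
    obtain ⟨e, he, hqe⟩ := hexe
    rw [Finset.mem_biUnion]
    exact ⟨e, he, Finset.mem_filter.mpr
      ⟨Nat.mem_primeFactors.mpr ⟨hqp, hqe, (hdivpos e (hSA he)).ne'⟩, hq2⟩⟩
  -- cardinality chain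
  have hcount : ∀ e ∈ S, ((((e / g).primeFactors).filter
      (fun q : ℕ => K₂ * A.card < (q : ℝ))).card : ℝ) ≤ C :=
    fun e he => hCbound A.card (e / g) hN2 (hdivpos e (hSA he)) (h₂ e (hSA he))
  have hchain : (M : ℝ) ≤ 2 * C * B.card := by
    have s1 : (M : ℝ) ≤ ((((∏ a ∈ A, a / g).primeFactors).filter
        (fun q : ℕ => K₂ * A.card < (q : ℝ))).card : ℝ) := by exact_mod_cast hM'
    have s2 : ((((∏ a ∈ A, a / g).primeFactors).filter
          (fun q : ℕ => K₂ * A.card < (q : ℝ))).card : ℝ) ≤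
        ((S.biUnion (fun e => ((e / g).primeFactors).filter
          (fun q : ℕ => K₂ * A.card < (q : ℝ)))).card : ℝ) := by
      exact_mod_cast Finset.card_le_card hsub
    have s3 : ((S.biUnion (fun e => ((e / g).primeFactors).filter
          (fun q : ℕ => K₂ * A.card < (q : ℝ)))).card : ℝ) ≤
        ∑ e ∈ S, ((((e / g).primeFactors).filter
          (fun q : ℕ => K₂ * A.card < (q : ℝ))).card : ℝ) := by
      have := Finset.card_biUnion_le (s := S) (t := fun e => ((e / g).primeFactors).filter
          (fun q : ℕ => K₂ * A.card < (q : ℝ)))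
      exact_mod_cast this
    have s4 : ∑ e ∈ S, ((((e / g).primeFactors).filter
          (fun q : ℕ => K₂ * A.card < (q : ℝ))).card : ℝ) ≤ ∑ _e ∈ S, C :=
      Finset.sum_le_sum hcount
    have s5 : (∑ _e ∈ S, C) = (S.card : ℝ) * C := by
      rw [Finset.sum_const, nsmul_eq_mul]
    have s6 : (S.card : ℝ) * C ≤ (2 * B.card : ℝ) * C := by
      apply mul_le_mul_of_nonneg_right _ (by linarith)
      exact_mod_cast hScard
    calc (M:ℝ) ≤ _ := s1
      _ ≤ _ := s2
      _ ≤ _ := s3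
      _ ≤ _ := s4
      _ = _ := s5
      _ ≤ (2 * B.card : ℝ) * C := s6
      _ = 2 * C * B.card := by ring
  rw [inv_mul_le_iff₀ hCpos]
  exact hchain
end

section
/- Let K be a field, B a finite set of nonzero complex numbers, and A ⊆ B·B with A ⊆ K. Then there exists a set B' ⊆ K with |B'| ≤ 2|B| such that A ⊆ B'·B'. -/
open scoped Pointwise

/-- If `A ⊆ B·B` with all elements of `A` in a subfield `K` of `ℂ`, then there is
`B' ⊆ K` with `|B'| ≤ 2|B|` and `A ⊆ B'·B'`. -/
theorem reduction_to_subfield (K : Subfield ℂ) (B A : Finset ℂ) (hB0 : ∀ b ∈ B, b ≠ 0)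
    (hA : A ⊆ B * B) (hAK : ∀ a ∈ A, a ∈ K) :
    ∃ B' : Finset ℂ, (∀ b ∈ B', b ∈ K) ∧ B'.card ≤ 2 * B.card ∧ A ⊆ B' * B' := by
  classical
  set H : Subgroup ℂˣ :=
    { carrier := {u | (u : ℂ) ∈ K}
      mul_mem' := fun ha hb => by simpa using K.mul_mem ha hb
      one_mem' := by simpa using K.one_mem
      inv_mem' := fun {u} hu => by simpa using K.inv_mem hu } with hH
  let Q := ℂˣ ⧸ H
  let π : ℂˣ →* Q := QuotientGroup.mk' H
  let r : Q → ℂˣ := Quotient.out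
  have hr : ∀ q : Q, π (r q) = q := fun q => QuotientGroup.out_eq' q
  have hmemK : ∀ u : ℂˣ, π u = 1 → (u : ℂ) ∈ K := by
    intro u hu
    have : u ∈ H := (QuotientGroup.eq_one_iff u).mp hu
    exact this
  let g1 : {x // x ∈ B} → ℂ := fun b => ((Units.mk0 b.1 (hB0 b.1 b.2)) / r (π (Units.mk0 b.1 (hB0 b.1 b.2))) : ℂˣ)
  let g2 : {x // x ∈ B} → ℂ := fun b => ((Units.mk0 b.1 (hB0 b.1 b.2)) * r ((π (Units.mk0 b.1 (hB0 b.1 b.2)))⁻¹) : ℂˣ)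
  refine ⟨B.attach.image g1 ∪ B.attach.image g2, ?_, ?_, ?_⟩
  · intro x hx
    rcases Finset.mem_union.mp hx with hx | hx
    · rcases Finset.mem_image.mp hx with ⟨b, _, rfl⟩
      apply hmemK
      simp [g1, map_div, hr]
    · rcases Finset.mem_image.mp hx with ⟨b, _, rfl⟩
      apply hmemK
      simp [g2, map_mul, hr]
  · calc (B.attach.image g1 ∪ B.attach.image g2).card
        ≤ (B.attach.image g1).card + (B.attach.image g2).card := Finset.card_union_le _ _
      _ ≤ B.attach.card + B.attach.card :=
        Nat.add_le_add (Finset.card_image_le) (Finset.card_image_le)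
      _ = 2 * B.card := by rw [Finset.card_attach]; ring
  · intro a ha
    obtain ⟨b, hb, c, hc, habc⟩ := Finset.mem_mul.mp (hA ha)
    have haK : a ∈ K := hAK a ha
    set u : ℂˣ := Units.mk0 b (hB0 b hb)
    set v : ℂˣ := Units.mk0 c (hB0 c hc)
    have huv : π (u * v) = 1 := by
      apply (QuotientGroup.eq_one_iff _).mpr
      show ((u * v : ℂˣ) : ℂ) ∈ K
      simpa [u, v, habc] using haK
    have hvu : (π v)⁻¹ = π u := by
      rw [map_mul] at huv
      rw [eq_comm, eq_inv_iff_mul_eq_one]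
      exact huv
    have key : a = g1 ⟨b, hb⟩ * g2 ⟨c, hc⟩ := by
      simp only [g1, g2, hvu]
      rw [← Units.val_mul]
      change a = ((u / r (π u) * (v * r ((π v)⁻¹)) : ℂˣ) : ℂ)
      rw [hvu]
      have : u / r (π u) * (v * r (π u)) = u * v := by
        rw [mul_comm v (r (π u)), ← mul_assoc]; simp
      rw [this]
      simp [u, v, habc]
    rw [key]
    exact Finset.mul_mem_mul
      (Finset.mem_union_left _ (Finset.mem_image_of_mem g1 (Finset.mem_attach _ _)))
      (Finset.mem_union_right _ (Finset.mem_image_of_mem g2 (Finset.mem_attach _ _)))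
end

section
/- Let G be a bipartite graph with parts X and Y, each a copy of a finite set B of positive integers, where each edge (b₁, b₂) is labeled by the product b₁·b₂. Suppose there is a prime p and an integer D such that exactly one edge label a satisfies ord_p(a) > ord_p(D) while all other edge labels a' satisfy ord_p(a') = ord_p(D). Then G contains no cycle passing through the distinguished edge. -/
/-- If exactly one edge label of a bipartite multiplication graph has `p`-adic valuation
exceeding that of `D` while all other edge labels have valuation equal to that of `D`,
then no cycle passes through the distinguished edge. A cycle of length `2m` is encoded by
injective maps `c, d : ZMod m → ℕ` (the vertices in the two parts) with edges
`(c i, d i)` and `(c (i+1), d i)`. -/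
theorem no_cycle_through_distinguished_edge (B : Finset ℕ) (hB : ∀ b ∈ B, 0 < b)
    (E : Finset (ℕ × ℕ)) (hE : ∀ e ∈ E, e.1 ∈ B ∧ e.2 ∈ B)
    (p D : ℕ) (hp : p.Prime) (hD : 0 < D)
    (e₀ : ℕ × ℕ) (he₀ : e₀ ∈ E)
    (hval : padicValNat p D < padicValNat p (e₀.1 * e₀.2))
    (hval' : ∀ e ∈ E, e ≠ e₀ → padicValNat p (e.1 * e.2) = padicValNat p D) :
    ¬ ∃ (m : ℕ) (c d : ZMod m → ℕ), 2 ≤ m ∧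
        Function.Injective c ∧ Function.Injective d ∧
        (∀ i, (c i, d i) ∈ E ∧ (c (i + 1), d i) ∈ E) ∧
        (∃ i, (c i, d i) = e₀ ∨ (c (i + 1), d i) = e₀) := by
  rintro ⟨m, c, d, hm, hc, hd, hEdge, i₀, hi₀⟩
  obtain ⟨k, rfl⟩ : ∃ k, m = k + 2 := ⟨m - 2, by omega⟩
  haveI : NeZero (k + 2) := ⟨by omega⟩
  haveI : Fact (1 < k + 2) := ⟨by omega⟩
  haveI : Fact p.Prime := ⟨hp⟩
  have h10 : (1 : ZMod (k + 2)) ≠ 0 := one_ne_zero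
  have hcpos : ∀ i, 0 < c i := fun i => hB _ (hE _ (hEdge i).1).1
  have hdpos : ∀ i, 0 < d i := fun i => hB _ (hE _ (hEdge i).1).2
  set v : ℕ → ℕ := padicValNat p with hv
  -- the two sums of valuations are equal
  have hsum : (∑ i : ZMod (k + 2), v (c i * d i))
      = ∑ i : ZMod (k + 2), v (c (i + 1) * d i) := by
    have e1 : (∑ i : ZMod (k + 2), v (c i * d i))
        = ∑ i : ZMod (k + 2), (v (c i) + v (d i)) :=
      Finset.sum_congr rfl fun i _ => padicValNat.mul (hcpos i).ne' (hdpos i).ne'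
    have e2 : (∑ i : ZMod (k + 2), v (c (i + 1) * d i))
        = ∑ i : ZMod (k + 2), (v (c (i + 1)) + v (d i)) :=
      Finset.sum_congr rfl fun i _ => padicValNat.mul (hcpos (i + 1)).ne' (hdpos i).ne'
    have e3 : (∑ i : ZMod (k + 2), v (c (i + 1)))
        = ∑ i : ZMod (k + 2), v (c i) :=
      Fintype.sum_equiv (Equiv.addRight (1 : ZMod (k + 2))) _ _ (fun i => rfl)
    rw [e1, e2, Finset.sum_add_distrib, Finset.sum_add_distrib, e3]
  have hcard : (Finset.univ : Finset (ZMod (k + 2))).card = k + 2 := by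
    simp [ZMod.card]
  have hcarde : ((Finset.univ : Finset (ZMod (k + 2))).erase i₀).card = k + 1 := by
    simp [Finset.card_erase_of_mem (Finset.mem_univ _), hcard]
  rcases hi₀ with h | h
  · -- distinguished edge is (c i₀, d i₀)
    have hne2 : ∀ i : ZMod (k + 2), (c (i + 1), d i) ≠ e₀ := by
      intro i heq
      rw [← h] at heq
      have hdi : i = i₀ := hd (congrArg Prod.snd heq)
      have hci : i + 1 = i₀ := hc (congrArg Prod.fst heq)
      rw [hdi] at hci
      exact h10 (by linear_combination hci)
    have hS2 : (∑ i : ZMod (k + 2), v (c (i + 1) * d i)) = (k + 2) * v D := by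
      rw [Finset.sum_congr rfl fun i _ => hval' _ (hEdge i).2 (hne2 i),
        Finset.sum_const, hcard, smul_eq_mul]
    have hne1 : ∀ i ∈ (Finset.univ : Finset (ZMod (k + 2))).erase i₀,
        (c i, d i) ≠ e₀ := by
      intro i hi heq
      rw [← h] at heq
      exact (Finset.mem_erase.mp hi).1 (hd (congrArg Prod.snd heq))
    have hS1 : (∑ i : ZMod (k + 2), v (c i * d i))
        = (k + 1) * v D + v (e₀.1 * e₀.2) := by
      rw [← Finset.sum_erase_add _ _ (Finset.mem_univ i₀),
        Finset.sum_congr rfl fun i hi => hval' _ (hEdge i).1 (hne1 i hi),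
        Finset.sum_const, hcarde, smul_eq_mul, ← h]
    rw [hS1, hS2] at hsum
    have : (k + 2) * v D = (k + 1) * v D + v D := by ring
    omega
  · -- distinguished edge is (c (i₀+1), d i₀)
    have hne1 : ∀ i : ZMod (k + 2), (c i, d i) ≠ e₀ := by
      intro i heq
      rw [← h] at heq
      have hdi : i = i₀ := hd (congrArg Prod.snd heq)
      have hci : i = i₀ + 1 := hc (congrArg Prod.fst heq)
      rw [hdi] at hci
      exact h10 (by linear_combination -hci)
    have hS1 : (∑ i : ZMod (k + 2), v (c i * d i)) = (k + 2) * v D := by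
      rw [Finset.sum_congr rfl fun i _ => hval' _ (hEdge i).1 (hne1 i),
        Finset.sum_const, hcard, smul_eq_mul]
    have hne2 : ∀ i ∈ (Finset.univ : Finset (ZMod (k + 2))).erase i₀,
        (c (i + 1), d i) ≠ e₀ := by
      intro i hi heq
      rw [← h] at heq
      exact (Finset.mem_erase.mp hi).1 (hd (congrArg Prod.snd heq))
    have hS2 : (∑ i : ZMod (k + 2), v (c (i + 1) * d i))
        = (k + 1) * v D + v (e₀.1 * e₀.2) := by
      rw [← Finset.sum_erase_add _ _ (Finset.mem_univ i₀),
        Finset.sum_congr rfl fun i hi => hval' _ (hEdge i).2 (hne2 i hi),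
        Finset.sum_const, hcarde, smul_eq_mul, ← h]
    rw [hS1, hS2] at hsum
    have : (k + 2) * v D = (k + 1) * v D + v D := by ring
    omega
end

section
/- Any bipartite graph on v vertices containing no cycle of length 2k has at most 100k·v^{1+1/k} edges. -/
open Finset SimpleGraph

set_option linter.unusedSectionVars false
set_option linter.unusedVariables false
set_option maxHeartbeats 1600000

namespace BondySimonovitsProof

variable {V : Type*} [Fintype V] [DecidableEq V]



/-- Neighborhood as a Finset, with a classical instance (instance-independent API). -/
noncomputable def nbr (H : SimpleGraph V) (v : V) : Finset V :=
  @Finset.filter _ (fun u => H.Adj v u) (Classical.decPred _) Finset.univ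

lemma mem_nbr {H : SimpleGraph V} {v u : V} : u ∈ nbr H v ↔ H.Adj v u := by
  simp [nbr]

/-- BFS layer. -/
noncomputable def layer (H : SimpleGraph V) (r : V) (j : ℕ) : Finset V :=
  @Finset.filter _ (fun v => H.Reachable r v ∧ H.dist r v = j) (Classical.decPred _) Finset.univ

lemma mem_layer {H : SimpleGraph V} {r v : V} {j : ℕ} :
    v ∈ layer H r j ↔ H.Reachable r v ∧ H.dist r v = j := by
  simp [layer]

lemma layer_disjoint {H : SimpleGraph V} {r : V} {i j : ℕ} (h : i ≠ j) :
    Disjoint (layer H r i) (layer H r j) := by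
  rw [Finset.disjoint_left]
  intro a ha ha'
  rw [mem_layer] at ha ha'
  exact h (ha.2 ▸ ha'.2)

/-- Min-degree subgraph extraction, sum version. -/
lemma exists_min_degree_subset (G : SimpleGraph V) (d : ℝ) (hd : 0 ≤ d) :
    ∀ S : Finset V, 2 * d * S.card < ∑ v ∈ S, (((nbr G v) ∩ S).card : ℝ) →
    ∃ T ⊆ S, T.Nonempty ∧ ∀ v ∈ T, d < (((nbr G v) ∩ T).card : ℝ) := by
  intro S
  induction S using Finset.strongInduction with
  | _ S ih =>
    intro h
    by_cases hall : ∀ v ∈ S, d < (((nbr G v) ∩ S).card : ℝ)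
    · refine ⟨S, le_refl _, ?_, hall⟩
      rcases S.eq_empty_or_nonempty with rfl | hS
      · simp at h
      · exact hS
    · push_neg at hall
      obtain ⟨v₀, hv₀S, hv₀d⟩ := hall
      have hsub : S.erase v₀ ⊂ S := Finset.erase_ssubset hv₀S
      -- per-term estimate
      have hterm : ∀ v ∈ S.erase v₀, (((nbr G v) ∩ S).card : ℝ)
          ≤ ((nbr G v) ∩ S.erase v₀).card + (if v₀ ∈ nbr G v then (1:ℝ) else 0) := by
        intro v hv
        have hins : (nbr G v) ∩ S.erase v₀ = ((nbr G v) ∩ S).erase v₀ := by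
          ext x
          simp only [Finset.mem_inter, Finset.mem_erase]
          tauto
        by_cases hmem : v₀ ∈ nbr G v
        · have hmem' : v₀ ∈ (nbr G v) ∩ S := Finset.mem_inter.mpr ⟨hmem, hv₀S⟩
          have hce := Finset.card_erase_add_one hmem'
          rw [hins, if_pos hmem]
          push_cast [← hce]
          ring_nf
          exact le_refl _
        · rw [hins, if_neg hmem, Finset.erase_eq_of_notMem (by simp [hmem]), add_zero]
      -- the indicator sum is at most d
      have hind : ∑ v ∈ S.erase v₀, (if v₀ ∈ nbr G v then (1:ℝ) else 0)
          ≤ (((nbr G v₀) ∩ S).card : ℝ) := by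
        rw [Finset.sum_ite, Finset.sum_const_zero, add_zero, Finset.sum_const, nsmul_eq_mul, mul_one]
        have hsubf : (S.erase v₀).filter (fun v => v₀ ∈ nbr G v) ⊆ (nbr G v₀) ∩ S := by
          intro x hx
          simp only [Finset.mem_filter, Finset.mem_erase] at hx
          refine Finset.mem_inter.mpr ⟨?_, hx.1.2⟩
          rw [mem_nbr]
          exact (mem_nbr.mp hx.2).symm
        exact_mod_cast Nat.cast_le.mpr (Finset.card_le_card hsubf)
      have hsum' : ∑ v ∈ S, (((nbr G v) ∩ S).card : ℝ)
          = (((nbr G v₀) ∩ S).card : ℝ) + ∑ v ∈ S.erase v₀, (((nbr G v) ∩ S).card : ℝ) := by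
        rw [← Finset.add_sum_erase _ _ hv₀S]
      have hkey : 2 * d * (S.erase v₀).card
          < ∑ v ∈ S.erase v₀, (((nbr G v) ∩ S.erase v₀).card : ℝ) := by
        have h1 : ∑ v ∈ S.erase v₀, (((nbr G v) ∩ S).card : ℝ)
            ≤ (∑ v ∈ S.erase v₀, (((nbr G v) ∩ S.erase v₀).card : ℝ)) + d := by
          calc ∑ v ∈ S.erase v₀, (((nbr G v) ∩ S).card : ℝ)
              ≤ ∑ v ∈ S.erase v₀, ((((nbr G v) ∩ S.erase v₀).card : ℝ)
                  + (if v₀ ∈ nbr G v then (1:ℝ) else 0)) := Finset.sum_le_sum hterm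
            _ = (∑ v ∈ S.erase v₀, (((nbr G v) ∩ S.erase v₀).card : ℝ))
                  + ∑ v ∈ S.erase v₀, (if v₀ ∈ nbr G v then (1:ℝ) else 0) := by
                rw [Finset.sum_add_distrib]
            _ ≤ _ := by linarith [hind.trans hv₀d]
        have hcard : ((S.erase v₀).card : ℝ) = (S.card : ℝ) - 1 := by
          rw [Finset.card_erase_of_mem hv₀S]
          have : 1 ≤ S.card := Finset.card_pos.mpr ⟨v₀, hv₀S⟩
          push_cast [Nat.cast_sub this]
          ring
        rw [hcard]
        have := hv₀d
        nlinarith [hsum', h]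
      obtain ⟨T, hT1, hT2, hT3⟩ := ih (S.erase v₀) hsub hkey
      exact ⟨T, hT1.trans (Finset.erase_subset _ _), hT2, hT3⟩



/-- Parity of a walk's length, from a proper 2-coloring. -/
lemma walk_parity {H : SimpleGraph V} {c : V → ZMod 2}
    (hc : ∀ {a b : V}, H.Adj a b → c a ≠ c b) {a b : V} (p : H.Walk a b) :
    (p.length : ZMod 2) = c b - c a := by
  induction p with
  | nil => simp
  | cons h q ih =>
    rename_i u x w
    have hstep : ∀ y z : ZMod 2, y ≠ z → z - y = 1 := by decide
    rw [SimpleGraph.Walk.length_cons]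
    push_cast
    rw [ih]
    have := hstep _ _ (hc h)
    linear_combination -this

lemma dist_parity {H : SimpleGraph V} {c : V → ZMod 2}
    (hc : ∀ {a b : V}, H.Adj a b → c a ≠ c b) {r v : V} (hr : H.Reachable r v) :
    ((H.dist r v : ℕ) : ZMod 2) = c v - c r := by
  obtain ⟨p, hp⟩ := hr.exists_walk_length_eq_dist
  rw [← hp]
  exact walk_parity hc p

/-- For adjacent vertices (reachable from r), distances differ by exactly one. -/
lemma adj_dist {H : SimpleGraph V} {c : V → ZMod 2}
    (hc : ∀ {a b : V}, H.Adj a b → c a ≠ c b) {r u v : V}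
    (hr : H.Reachable r u) (h : H.Adj u v) :
    H.dist r v = H.dist r u + 1 ∨ H.dist r u = H.dist r v + 1 := by
  have hrv : H.Reachable r v := hr.trans h.reachable
  have h1 : H.dist r v ≤ H.dist r u + 1 := by
    obtain ⟨p, hp⟩ := hr.exists_walk_length_eq_dist
    have := H.dist_le (p.concat h)
    rwa [SimpleGraph.Walk.length_concat, hp] at this
  have h2 : H.dist r u ≤ H.dist r v + 1 := by
    obtain ⟨p, hp⟩ := hrv.exists_walk_length_eq_dist
    have := H.dist_le (p.concat h.symm)
    rwa [SimpleGraph.Walk.length_concat, hp] at this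
  have hne : H.dist r v ≠ H.dist r u := by
    intro heq
    have p1 := dist_parity hc hr
    have p2 := dist_parity hc hrv
    rw [heq] at p2
    rw [p1] at p2
    have : c u = c v := by linear_combination p2
    exact hc h this
  omega

/-- Existence of a parent: a neighbor strictly closer to the root. -/
lemma exists_parent {H : SimpleGraph V} {r v : V} (hr : H.Reachable r v)
    (h0 : 0 < H.dist r v) :
    ∃ u, H.Adj v u ∧ H.Reachable r u ∧ H.dist r u + 1 = H.dist r v := by
  obtain ⟨p, hp⟩ := hr.exists_walk_length_eq_dist
  cases hrev : p.reverse with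
  | nil =>
    exfalso
    have hl : p.length = 0 := by
      rw [← SimpleGraph.Walk.length_reverse, hrev, SimpleGraph.Walk.length_nil]
    rw [hl] at hp
    omega
  | cons hadj q =>
    rename_i x
    have hrx : H.Reachable r x := ⟨q.reverse⟩
    refine ⟨x, hadj, hrx, ?_⟩
    have hlen : q.length + 1 = H.dist r v := by
      have := congrArg SimpleGraph.Walk.length hrev
      rw [SimpleGraph.Walk.length_reverse, hp] at this
      simpa [SimpleGraph.Walk.length_cons] using this.symm
    have h1 : H.dist r x ≤ q.length := by
      have := H.dist_le q.reverse
      rwa [SimpleGraph.Walk.length_reverse] at this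
    have h2 : H.dist r v ≤ H.dist r x + 1 := by
      obtain ⟨p', hp'⟩ := hrx.exists_walk_length_eq_dist
      have := H.dist_le (p'.concat hadj.symm)
      rwa [SimpleGraph.Walk.length_concat, hp'] at this
    omega



section Parent

variable {H : SimpleGraph V} {r : V} {P : V → V}
  (hP : ∀ v, H.Reachable r v → 0 < H.dist r v →
    H.Adj v (P v) ∧ H.Reachable r (P v) ∧ H.dist r (P v) + 1 = H.dist r v)

include hP

lemma iter_parent : ∀ (j : ℕ) (v : V), H.Reachable r v → j ≤ H.dist r v →
    H.Reachable r (P^[j] v) ∧ H.dist r (P^[j] v) + j = H.dist r v := by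
  intro j
  induction j with
  | zero => intro v hv _; simpa using hv
  | succ n ih =>
    intro v hv hj
    have h0 : 0 < H.dist r v := by omega
    obtain ⟨hadj, hre, hdi⟩ := hP v hv h0
    have hn : n ≤ H.dist r (P v) := by omega
    obtain ⟨h1, h2⟩ := ih (P v) hre hn
    rw [Function.iterate_succ_apply]
    exact ⟨h1, by omega⟩

omit hP in
lemma iter_eq_mono {x y : V} {n : ℕ} (h : P^[n] x = P^[n] y) (m : ℕ) :
    P^[m + n] x = P^[m + n] y := by
  rw [Function.iterate_add_apply, Function.iterate_add_apply, h]

lemma chain_walk : ∀ (j : ℕ) (v : V), H.Reachable r v → j ≤ H.dist r v →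
    ∃ w : H.Walk v (P^[j] v), w.length = j ∧
      w.support = (List.range (j+1)).map (fun t => P^[t] v) := by
  intro j
  induction j with
  | zero =>
    intro v hv _
    exact ⟨SimpleGraph.Walk.nil, by simp, by simp⟩
  | succ n ih =>
    intro v hv hj
    have h0 : 0 < H.dist r v := by omega
    obtain ⟨hadj, hre, hdi⟩ := hP v hv h0
    obtain ⟨w, hw1, hw2⟩ := ih (P v) hre (by omega)
    have hty : P^[n] (P v) = P^[n+1] v := (Function.iterate_succ_apply P n v).symm
    refine ⟨(SimpleGraph.Walk.cons hadj w).copy rfl (by rw [hty]), ?_, ?_⟩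
    · simp [hw1]
    · rw [SimpleGraph.Walk.support_copy, SimpleGraph.Walk.support_cons, hw2]
      have : (List.range (n+2)) = 0 :: (List.range (n+1)).map Nat.succ := by
        rw [List.range_succ_eq_map]
      rw [this, List.map_cons, List.map_map]
      refine congrArg₂ _ (by simp) ?_
      apply List.map_congr_left
      intro t ht
      simp only [Function.comp_apply, Function.iterate_succ_apply]

omit hP in
lemma chain_support_mem {j : ℕ} {v x : V}
    (hx : x ∈ (List.range (j+1)).map (fun t => P^[t] v)) :
    ∃ t ≤ j, x = P^[t] v := by
  simp only [List.mem_map, List.mem_range] at hx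
  obtain ⟨t, ht, rfl⟩ := hx
  exact ⟨t, by omega, rfl⟩

lemma chain_support_nodup {j : ℕ} {v : V} (hv : H.Reachable r v) (hj : j ≤ H.dist r v) :
    ((List.range (j+1)).map (fun t => P^[t] v)).Nodup := by
  refine List.Nodup.map_on ?_ List.nodup_range
  intro s hs t ht heq
  rw [List.mem_range] at hs ht
  have h1 := (iter_parent hP s v hv (by omega)).2
  have h2 := (iter_parent hP t v hv (by omega)).2
  rw [heq] at h1
  omega

/-- The key cycle construction: a crossing pair with an exact-length layer path
yields a cycle of length `2k`, contradiction. -/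
lemma cycle_of_crossing_path {k i t₀ : ℕ}
    (hcyc : ∀ (u : V) (w : H.Walk u u), w.IsCycle → w.length ≠ 2 * k)
    (hti : t₀ < i) (hik : i ≤ k)
    {u v : V} (hu : H.Reachable r u) (hv : H.Reachable r v)
    (hdu : H.dist r u = i) (hdv : H.dist r v = i)
    (heq : P^[i - t₀] u = P^[i - t₀] v)
    (hne : P^[i - t₀ - 1] u ≠ P^[i - t₀ - 1] v)
    (Q : H.Walk u v) (hQpath : Q.IsPath) (hQlen : Q.length = 2 * (k - i + t₀))
    (hQsupp : ∀ x ∈ Q.support, H.Reachable r x ∧ i ≤ H.dist r x) :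
    False := by
  obtain ⟨wu, hwulen, hwusupp⟩ := chain_walk hP (i - t₀) u hu (by omega)
  obtain ⟨wv, hwvlen, hwvsupp⟩ := chain_walk hP (i - t₀ - 1) v hv (by omega)
  have hwu_mem : ∀ x ∈ wu.support, ∃ t ≤ i - t₀, x = P^[t] u := by
    intro x hx; rw [hwusupp] at hx; exact chain_support_mem hx
  have hwv_mem : ∀ x ∈ wv.support, ∃ t ≤ i - t₀ - 1, x = P^[t] v := by
    intro x hx; rw [hwvsupp] at hx; exact chain_support_mem hx
  have hdist_u_iter : ∀ t, t ≤ i - t₀ → H.dist r (P^[t] u) = i - t := by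
    intro t ht
    have := (iter_parent hP t u hu (by omega)).2
    omega
  have hdist_v_iter : ∀ t, t ≤ i - t₀ → H.dist r (P^[t] v) = i - t := by
    intro t ht
    have := (iter_parent hP t v hv (by omega)).2
    omega
  have hda : H.dist r (P^[i - t₀] u) = t₀ := by
    have := hdist_u_iter (i - t₀) (le_refl _); omega
  have hdb : H.dist r (P^[i - t₀ - 1] v) = t₀ + 1 := by
    have := hdist_v_iter (i - t₀ - 1) (by omega); omega
  have hrb : H.Reachable r (P^[i - t₀ - 1] v) :=
    (iter_parent hP (i - t₀ - 1) v hv (by omega)).1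
  -- adjacency between the meet vertex and the top of v's chain
  have hab : H.Adj (P^[i - t₀] u) (P^[i - t₀ - 1] v) := by
    obtain ⟨hadj, _, _⟩ := hP (P^[i - t₀ - 1] v) hrb (by omega)
    have hPb : P (P^[i - t₀ - 1] v) = P^[i - t₀] u := by
      rw [← Function.iterate_succ_apply' P (i - t₀ - 1) v]
      have hss : (i - t₀ - 1).succ = i - t₀ := by omega
      rw [hss]
      exact heq.symm
    rw [← hPb]
    exact hadj.symm
  -- the long walk from b to a
  have hQrev_supp : ∀ x ∈ Q.reverse.support, H.Reachable r x ∧ i ≤ H.dist r x := by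
    intro x hx
    rw [SimpleGraph.Walk.support_reverse, List.mem_reverse] at hx
    exact hQsupp x hx
  have hwu_nodup : wu.support.Nodup := by
    rw [hwusupp]; exact chain_support_nodup hP hu (by omega)
  have hwv_nodup : wv.support.Nodup := by
    rw [hwvsupp]; exact chain_support_nodup hP hv (by omega)
  have hu_notin_tail : u ∉ wu.support.tail := by
    have h := hwu_nodup
    rw [SimpleGraph.Walk.support_eq_cons, List.nodup_cons] at h
    exact h.1
  have hv_notin_Qtail : v ∉ Q.reverse.support.tail := by
    have h := hQpath.reverse.support_nodup
    rw [SimpleGraph.Walk.support_eq_cons, List.nodup_cons] at h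
    exact h.1
  -- disjointness:  wv chain  vs  tail of Q.reverse
  have hdisj1 : ∀ x ∈ wv.support, x ∉ Q.reverse.support.tail := by
    intro x hx1 hx2
    obtain ⟨t, ht, rfl⟩ := hwv_mem x hx1
    have hd1 := hdist_v_iter t (by omega)
    have hd2 := (hQrev_supp _ (List.mem_of_mem_tail hx2)).2
    have ht0 : t = 0 := by omega
    subst ht0
    simp only [Function.iterate_zero_apply] at hx2
    exact hv_notin_Qtail hx2
  -- disjointness:  tail of wu  vs  the rest
  have hdisj2 : ∀ x ∈ wu.support.tail, x ∈ wv.support ∨ x ∈ Q.reverse.support.tail → False := by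
    intro x hx1 hcase
    obtain ⟨t, ht, rfl⟩ := hwu_mem x (List.mem_of_mem_tail hx1)
    have htpos : 0 < t := by
      rcases Nat.eq_zero_or_pos t with rfl | h
      · simp only [Function.iterate_zero_apply] at hx1
        exact absurd hx1 hu_notin_tail
      · exact h
    have hdx := hdist_u_iter t ht
    rcases hcase with hx2 | hx2
    · obtain ⟨s, hs, hsx⟩ := hwv_mem _ hx2
      have hds := hdist_v_iter s (by omega)
      rw [← hsx] at hds
      have hst : s = t := by omega
      subst hst
      have hfin : P^[i - t₀ - 1] u = P^[i - t₀ - 1] v := by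
        have h1 : (i - t₀ - 1 - s) + s = i - t₀ - 1 := by omega
        have h2 := iter_eq_mono (P := P) hsx (i - t₀ - 1 - s)
        rwa [h1] at h2
      exact hne hfin
    · have := (hQrev_supp _ (List.mem_of_mem_tail hx2)).2
      omega
  -- assemble the path q : b → a
  have hq_support : ((wv.reverse.append Q.reverse).append wu).support
      = wv.reverse.support ++ (Q.reverse.support.tail ++ wu.support.tail) := by
    rw [SimpleGraph.Walk.support_append, SimpleGraph.Walk.support_append, List.append_assoc]
  have hq_path : ((wv.reverse.append Q.reverse).append wu).IsPath := by
    rw [SimpleGraph.Walk.isPath_def, hq_support]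
    rw [SimpleGraph.Walk.support_reverse]
    refine List.Nodup.append (List.nodup_reverse.mpr hwv_nodup) ?_ ?_
    · refine List.Nodup.append ?_ (hwu_nodup.sublist (List.tail_sublist _)) ?_
      · exact (hQpath.reverse.support_nodup).sublist (List.tail_sublist _)
      · -- Q.reverse tail vs wu tail
        intro x hx1 hx2
        exact hdisj2 x hx2 (Or.inr hx1)
    · -- wv.support.reverse vs rest
      intro x hx1 hx2
      rw [List.mem_reverse] at hx1
      rw [List.mem_append] at hx2
      rcases hx2 with hx2 | hx2
      · exact hdisj1 x hx1 hx2
      · -- x in wv.support and in wu.support.tail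
        exact hdisj2 x hx2 (Or.inl hx1)
  -- the edge s(a,b) is not an edge of q
  have hq_edge : s(P^[i - t₀] u, P^[i - t₀ - 1] v)
      ∉ ((wv.reverse.append Q.reverse).append wu).edges := by
    intro hmem
    rw [SimpleGraph.Walk.edges_append, SimpleGraph.Walk.edges_append, List.mem_append,
      List.mem_append] at hmem
    rcases hmem with (hmem | hmem) | hmem
    · have ha_mem := SimpleGraph.Walk.fst_mem_support_of_mem_edges _ hmem
      obtain ⟨t, ht, hteq⟩ := hwv_mem _ (by
        rwa [SimpleGraph.Walk.support_reverse, List.mem_reverse] at ha_mem)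
      have := hdist_v_iter t (by omega)
      rw [← hteq] at this
      rw [hda] at this
      omega
    · have ha_mem := SimpleGraph.Walk.fst_mem_support_of_mem_edges _ hmem
      have := (hQrev_supp _ ha_mem).2
      rw [hda] at this
      omega
    · have hb_mem := SimpleGraph.Walk.snd_mem_support_of_mem_edges _ hmem
      obtain ⟨t, ht, hteq⟩ := hwu_mem _ hb_mem
      have hdt := hdist_u_iter t ht
      rw [← hteq, hdb] at hdt
      have ht' : t = i - t₀ - 1 := by omega
      rw [ht'] at hteq
      exact hne (hteq.symm)
  -- the cycle
  have hcycle : (SimpleGraph.Walk.cons hab ((wv.reverse.append Q.reverse).append wu)).IsCycle := by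
    rw [SimpleGraph.Walk.cons_isCycle_iff]
    exact ⟨hq_path, hq_edge⟩
  have hlen : (SimpleGraph.Walk.cons hab ((wv.reverse.append Q.reverse).append wu)).length
      = 2 * k := by
    rw [SimpleGraph.Walk.length_cons, SimpleGraph.Walk.length_append,
      SimpleGraph.Walk.length_append, SimpleGraph.Walk.length_reverse,
      SimpleGraph.Walk.length_reverse, hwvlen, hwulen, hQlen]
    omega
  exact hcyc _ _ hcycle hlen

end Parent
lemma greedy (B : SimpleGraph V) (T : Finset V) (M : ℕ)
    (hdeg : ∀ v ∈ T, M ≤ ((nbr B v) ∩ T).card) :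
    ∀ (ℓ : ℕ) (F : Finset V) (v : V), v ∈ T → v ∉ F → ℓ + F.card < M →
    ∃ (z : V) (p : B.Walk z v), p.IsPath ∧ p.length = ℓ ∧
      ∀ x ∈ p.support, x ∈ T ∧ x ∉ F := by
  intro ℓ
  induction ℓ with
  | zero =>
    intro F v hv hvF _
    refine ⟨v, SimpleGraph.Walk.nil, by simp, by simp, ?_⟩
    intro x hx
    simp only [SimpleGraph.Walk.support_nil, List.mem_singleton] at hx
    subst hx; exact ⟨hv, hvF⟩
  | succ n ih =>
    intro F v hv hvF hM
    obtain ⟨z, p, hpath, hlen, hsupp⟩ := ih F v hv hvF (by omega)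
    have hzT : z ∈ T := (hsupp z p.start_mem_support).1
    have hcard : ((nbr B z ∩ T) \ (F ∪ p.support.toFinset)).card > 0 := by
      have h1 : (nbr B z ∩ T).card ≤ ((nbr B z ∩ T) \ (F ∪ p.support.toFinset)).card
          + (F ∪ p.support.toFinset).card := Finset.card_le_card_sdiff_add_card
      have h2 : (F ∪ p.support.toFinset).card ≤ F.card + (n + 1) := by
        calc (F ∪ p.support.toFinset).card ≤ F.card + p.support.toFinset.card :=
              Finset.card_union_le _ _
          _ ≤ F.card + p.support.length := by
              gcongr; exact p.support.toFinset_card_le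
          _ = F.card + (n + 1) := by rw [SimpleGraph.Walk.length_support, hlen]
      have h3 := hdeg z hzT
      omega
    obtain ⟨z', hz'⟩ := Finset.card_pos.mp hcard
    rw [Finset.mem_sdiff, Finset.mem_inter, Finset.mem_union, mem_nbr] at hz'
    obtain ⟨⟨hadj, hz'T⟩, hz'notin⟩ := hz'
    push_neg at hz'notin
    have hz'supp : z' ∉ p.support := by
      intro hmem
      exact hz'notin.2 (List.mem_toFinset.mpr hmem)
    refine ⟨z', SimpleGraph.Walk.cons hadj.symm p, ?_, by simp [hlen], ?_⟩
    · rw [SimpleGraph.Walk.cons_isPath_iff]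
      exact ⟨hpath, hz'supp⟩
    · intro x hx
      rw [SimpleGraph.Walk.support_cons, List.mem_cons] at hx
      rcases hx with rfl | hx
      · exact ⟨hz'T, hz'notin.1⟩
      · exact hsupp x hx

/-- Double counting of edges between two sets. -/
lemma double_count (B : SimpleGraph V) (A C : Finset V) :
    ∑ a ∈ A, ((nbr B a) ∩ C).card = ∑ c ∈ C, ((nbr B c) ∩ A).card := by
  classical
  have key : ∀ (X Y : Finset V) (a : V), ((nbr B a) ∩ Y).card
      = ∑ y ∈ Y, if B.Adj a y then 1 else 0 := by
    intro X Y a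
    rw [← Finset.sum_filter]
    simp only [Finset.sum_const, smul_eq_mul, mul_one]
    congr 1
    ext x
    simp only [Finset.mem_inter, Finset.mem_filter, mem_nbr]
    tauto
  calc ∑ a ∈ A, ((nbr B a) ∩ C).card = ∑ a ∈ A, ∑ c ∈ C, if B.Adj a c then 1 else 0 := by
        simp_rw [key A C]
    _ = ∑ c ∈ C, ∑ a ∈ A, if B.Adj a c then 1 else 0 := Finset.sum_comm
    _ = ∑ c ∈ C, ((nbr B c) ∩ A).card := by
        refine Finset.sum_congr rfl fun c _ => ?_
        rw [key C A c]
        refine Finset.sum_congr rfl fun a _ => ?_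
        simp [SimpleGraph.adj_comm]


section Sparsity

variable {H : SimpleGraph V} {r : V} {P : V → V}
  (hP : ∀ v, H.Reachable r v → 0 < H.dist r v →
    H.Adj v (P v) ∧ H.Reachable r (P v) ∧ H.dist r (P v) + 1 = H.dist r v)
  {c : V → ZMod 2} (hc : ∀ {a b : V}, H.Adj a b → c a ≠ c b)

lemma mapLe_support {G G' : SimpleGraph V} (h : G ≤ G') {a b : V} (p : G.Walk a b) :
    (p.mapLe h).support = p.support := by
  induction p with
  | nil => rfl
  | cons hadj q ih =>
      rw [SimpleGraph.Walk.mapLe] at ih ⊢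
      rw [SimpleGraph.Walk.map_cons, SimpleGraph.Walk.support_cons,
        SimpleGraph.Walk.support_cons, ih]

include hP hc in
lemma sparsity {k : ℕ} (hk : 2 ≤ k)
    (hcyc : ∀ (u : V) (w : H.Walk u u), w.IsCycle → w.length ≠ 2 * k)
    (i : ℕ) (hi1 : 1 ≤ i) (hik : i + 1 ≤ k) :
    ∑ v ∈ layer H r i, ((nbr H v) ∩ layer H r (i+1)).card
      ≤ (2*k+1) * ((layer H r i).card + (layer H r (i+1)).card) := by
  classical
  by_contra hbig
  push_neg at hbig
  set Li := layer H r i with hLi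
  set Li1 := layer H r (i+1) with hLi1
  have hdisjL : Disjoint Li Li1 := layer_disjoint (by omega)
  have hnotboth : ∀ z : V, z ∈ Li → z ∈ Li1 → False := by
    intro z h1 h2
    exact Finset.disjoint_left.mp hdisjL h1 h2
  -- the bipartite layer graph
  set B : SimpleGraph V :=
    { Adj := fun a b => H.Adj a b ∧ ((a ∈ Li ∧ b ∈ Li1) ∨ (a ∈ Li1 ∧ b ∈ Li)),
      symm := ⟨fun a b h => ⟨h.1.symm,
        h.2.elim (fun hh => Or.inr ⟨hh.2, hh.1⟩) (fun hh => Or.inl ⟨hh.2, hh.1⟩)⟩⟩,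
      loopless := ⟨fun a h => H.loopless.irrefl a h.1⟩ } with hB
  have hBadj : ∀ {a b : V}, B.Adj a b ↔
      (H.Adj a b ∧ ((a ∈ Li ∧ b ∈ Li1) ∨ (a ∈ Li1 ∧ b ∈ Li))) := fun {a b} => Iff.rfl
  -- degree computation in B
  have hnbr1 : ∀ v ∈ Li, nbr B v ∩ (Li ∪ Li1) = nbr H v ∩ Li1 := by
    intro v hv
    ext x
    simp only [Finset.mem_inter, mem_nbr, hBadj, Finset.mem_union]
    constructor
    · rintro ⟨⟨hadj, hcase⟩, _⟩
      rcases hcase with ⟨_, h2⟩ | ⟨h1, _⟩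
      · exact ⟨hadj, h2⟩
      · exact absurd h1 (fun h => hnotboth v hv h)
    · rintro ⟨hadj, hx⟩
      exact ⟨⟨hadj, Or.inl ⟨hv, hx⟩⟩, Or.inr hx⟩
  have hnbr2 : ∀ v ∈ Li1, nbr B v ∩ (Li ∪ Li1) = nbr H v ∩ Li := by
    intro v hv
    ext x
    simp only [Finset.mem_inter, mem_nbr, hBadj, Finset.mem_union]
    constructor
    · rintro ⟨⟨hadj, hcase⟩, _⟩
      rcases hcase with ⟨h1, _⟩ | ⟨_, h2⟩
      · exact absurd h1 (fun h => hnotboth v h hv)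
      · exact ⟨hadj, h2⟩
    · rintro ⟨hadj, hx⟩
      exact ⟨⟨hadj, Or.inr ⟨hv, hx⟩⟩, Or.inl hx⟩
  have hsum1 : ∑ v ∈ Li, (nbr B v ∩ (Li ∪ Li1)).card = ∑ v ∈ Li, ((nbr H v) ∩ Li1).card :=
    Finset.sum_congr rfl (fun v hv => by rw [hnbr1 v hv])
  have hsum2 : ∑ v ∈ Li1, (nbr B v ∩ (Li ∪ Li1)).card = ∑ v ∈ Li1, ((nbr H v) ∩ Li).card :=
    Finset.sum_congr rfl (fun v hv => by rw [hnbr2 v hv])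
  have hsumA : ∑ v ∈ Li ∪ Li1, (nbr B v ∩ (Li ∪ Li1)).card
      = 2 * ∑ v ∈ Li, ((nbr H v) ∩ Li1).card := by
    rw [Finset.sum_union hdisjL, hsum1, hsum2, double_count H Li1 Li]
    omega
  -- extract min-degree subset
  have hmd := exists_min_degree_subset B (2*k+1 : ℝ) (by positivity) (Li ∪ Li1) (by
    have hcardA : ((Li ∪ Li1).card : ℝ) = (Li.card : ℝ) + (Li1.card : ℝ) := by
      rw [Finset.card_union_of_disjoint hdisjL]; push_cast; ring
    have hsumA' : ∑ v ∈ Li ∪ Li1, ((nbr B v ∩ (Li ∪ Li1)).card : ℝ)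
        = 2 * (∑ v ∈ Li, (((nbr H v) ∩ Li1).card : ℕ) : ℝ) := by
      rw [← Nat.cast_sum, hsumA]; push_cast; ring
    rw [hsumA', hcardA]
    have hbigR : ((2*k+1 : ℕ) : ℝ) * (((Li.card : ℕ) : ℝ) + ((Li1.card : ℕ) : ℝ))
        < ((∑ v ∈ Li, ((nbr H v) ∩ Li1).card : ℕ) : ℝ) := by
      have := hbig
      push_cast
      exact_mod_cast this
    push_cast at hbigR ⊢
    nlinarith)
  obtain ⟨T, hTA, hTne, hTdeg⟩ := hmd
  have hTdegN : ∀ v ∈ T, 2*k+2 ≤ (nbr B v ∩ T).card := by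
    intro v hv
    have := hTdeg v hv
    have : (2*k+1 : ℕ) < (nbr B v ∩ T).card := by exact_mod_cast this
    omega
  obtain ⟨x₀, hx₀T⟩ := hTne
  -- restrict to the connected component of x₀ within T
  set Bt : SimpleGraph V :=
    { Adj := fun a b => B.Adj a b ∧ a ∈ T ∧ b ∈ T,
      symm := ⟨fun a b h => ⟨h.1.symm, h.2.2, h.2.1⟩⟩,
      loopless := ⟨fun a h => B.loopless.irrefl a h.1⟩ } with hBt
  have hBtadj : ∀ {a b : V}, Bt.Adj a b ↔ (B.Adj a b ∧ a ∈ T ∧ b ∈ T) := fun {a b} => Iff.rfl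
  have hBtH : Bt ≤ H := by
    intro a b hab
    exact ((hBtadj.mp hab).1).1
  set T' := T.filter (fun v => Bt.Reachable x₀ v) with hT'
  have hT'mem : ∀ {v : V}, v ∈ T' ↔ v ∈ T ∧ Bt.Reachable x₀ v := by
    intro v; rw [hT', Finset.mem_filter]
  have hT'adj : ∀ {p q : V}, p ∈ T' → Bt.Adj p q → q ∈ T' := by
    intro p q hp hpq
    rw [hT'mem] at hp ⊢
    exact ⟨(hBtadj.mp hpq).2.2, hp.2.trans hpq.reachable⟩
  have hT'deg : ∀ v ∈ T', 2*k+2 ≤ (nbr Bt v ∩ T').card := by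
    intro v hv
    refine le_trans (hTdegN v (hT'mem.mp hv).1) (Finset.card_le_card ?_)
    intro x hx
    rw [Finset.mem_inter, mem_nbr] at hx ⊢
    have hadj : Bt.Adj v x := hBtadj.mpr ⟨hx.1, (hT'mem.mp hv).1, hx.2⟩
    exact ⟨hadj, hT'adj hv hadj⟩
  have hT'A : T' ⊆ Li ∪ Li1 := fun x hx => hTA ((hT'mem.mp hx).1)
  -- layer facts for T'
  have hT'layer : ∀ {v : V}, v ∈ T' → H.Reachable r v ∧ i ≤ H.dist r v := by
    intro v hv
    have := hT'A hv
    rw [Finset.mem_union] at this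
    rcases this with h | h
    · have := (mem_layer).mp h; exact ⟨this.1, by omega⟩
    · have := (mem_layer).mp h; exact ⟨this.1, by omega⟩
  have hcross : ∀ {p q : V}, Bt.Adj p q → (p ∈ Li ∧ q ∈ Li1) ∨ (p ∈ Li1 ∧ q ∈ Li) := by
    intro p q h
    exact ((hBtadj.mp h).1).2
  -- U₀
  set U₀ := T' ∩ Li with hU₀
  have hU₀mem : ∀ {v : V}, v ∈ U₀ → v ∈ T' ∧ H.Reachable r v ∧ H.dist r v = i := by
    intro v hv
    rw [hU₀, Finset.mem_inter] at hv
    have := (mem_layer).mp hv.2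
    exact ⟨hv.1, this.1, this.2⟩
  have hx₀T' : x₀ ∈ T' := hT'mem.mpr ⟨hx₀T, SimpleGraph.Reachable.refl x₀⟩
  -- |U₀| ≥ 2
  have hU₀two : ∃ x y, x ∈ U₀ ∧ y ∈ U₀ ∧ x ≠ y := by
    -- find a vertex of T' in Li1
    have hW : ∃ w, w ∈ T' ∧ w ∈ Li1 := by
      have hx₀A := hT'A hx₀T'
      rw [Finset.mem_union] at hx₀A
      rcases hx₀A with h | h
      · have hpos : 0 < (nbr Bt x₀ ∩ T').card := by have := hT'deg x₀ hx₀T'; omega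
        obtain ⟨y, hy⟩ := Finset.card_pos.mp hpos
        rw [Finset.mem_inter, mem_nbr] at hy
        rcases hcross hy.1 with ⟨_, h2⟩ | ⟨h1, _⟩
        · exact ⟨y, hy.2, h2⟩
        · exact absurd h1 (fun hh => hnotboth x₀ h hh)
      · exact ⟨x₀, hx₀T', h⟩
    obtain ⟨w, hwT', hwLi1⟩ := hW
    have hsub : nbr Bt w ∩ T' ⊆ U₀ := by
      intro x hx
      rw [Finset.mem_inter, mem_nbr] at hx
      rcases hcross hx.1 with ⟨h1, _⟩ | ⟨_, h2⟩
      · exact absurd h1 (fun hh => hnotboth w hh hwLi1)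
      · rw [hU₀, Finset.mem_inter]; exact ⟨hx.2, h2⟩
    have h2le : 2 ≤ (nbr Bt w ∩ T').card := le_trans (by omega) (hT'deg w hwT')
    have := Finset.one_lt_card.mp (lt_of_lt_of_le (by omega) h2le)
    obtain ⟨x, hx, y, hy, hxy⟩ := this
    exact ⟨x, y, hsub hx, hsub hy, hxy⟩
  -- meet structure
  set F : V → V → Finset ℕ :=
    fun x y => (Finset.range (i+1)).filter (fun t => P^[i-t] x = P^[i-t] y) with hF
  have hFmem : ∀ {x y : V} {t : ℕ}, t ∈ F x y ↔ (t < i + 1 ∧ P^[i-t] x = P^[i-t] y) := by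
    intro x y t
    rw [hF]
    simp [Finset.mem_filter, Finset.mem_range]
  have hF0 : ∀ {x y : V}, x ∈ U₀ → y ∈ U₀ → (0 : ℕ) ∈ F x y := by
    intro x y hx hy
    obtain ⟨_, hxr, hxd⟩ := hU₀mem hx
    obtain ⟨_, hyr, hyd⟩ := hU₀mem hy
    have h1 : P^[i] x = r := by
      have := iter_parent hP i x hxr (by omega)
      have h0 : H.dist r (P^[i] x) = 0 := by omega
      exact ((this.1).dist_eq_zero_iff.mp h0).symm
    have h2 : P^[i] y = r := by
      have := iter_parent hP i y hyr (by omega)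
      have h0 : H.dist r (P^[i] y) = 0 := by omega
      exact ((this.1).dist_eq_zero_iff.mp h0).symm
    rw [hFmem]
    constructor
    · omega
    · simp only [Nat.sub_zero]; rw [h1, h2]
  have hFne : ∀ {x y : V}, x ∈ U₀ → y ∈ U₀ → (F x y).Nonempty := fun hx hy => ⟨0, hF0 hx hy⟩
  set mf : V → V → ℕ := fun x y => (F x y).sup id with hmf
  have hmf_mem : ∀ {x y : V}, x ∈ U₀ → y ∈ U₀ → mf x y ∈ F x y := by
    intro x y hx hy
    obtain ⟨b, hb, hbeq⟩ := Finset.exists_mem_eq_sup (F x y) (hFne hx hy) id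
    rw [hmf]
    simp only
    rw [hbeq]
    exact hb
  have hmf_le : ∀ {x y : V} {t : ℕ}, t ∈ F x y → t ≤ mf x y := by
    intro x y t ht
    exact Finset.le_sup (f := id) ht
  have hmf_lt : ∀ {x y : V}, x ∈ U₀ → y ∈ U₀ → x ≠ y → mf x y < i := by
    intro x y hx hy hxy
    have hm := hmf_mem hx hy
    rw [hFmem] at hm
    rcases Nat.lt_or_ge (mf x y) i with h | h
    · exact h
    · exfalso
      have : mf x y = i := by omega
      rw [this] at hm
      simp only [Nat.sub_self, Function.iterate_zero_apply] at hm
      exact hxy hm.2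
  have hFdown : ∀ {x y : V} {s t : ℕ}, t ∈ F x y → s ≤ t → s ∈ F x y := by
    intro x y s t ht hst
    rw [hFmem] at ht ⊢
    refine ⟨by omega, ?_⟩
    have h2 := iter_eq_mono (P := P) ht.2 (t - s)
    have h3 : (t - s) + (i - t) = i - s := by omega
    rwa [h3] at h2
  -- minimal meet over pairs
  obtain ⟨xs, ys, hxsU, hysU, hxsys⟩ := hU₀two
  set pairs := (U₀.offDiag).image (fun p => mf p.1 p.2) with hpairs
  have hpairsne : pairs.Nonempty := by
    refine ⟨mf xs ys, ?_⟩
    rw [hpairs]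
    exact Finset.mem_image.mpr ⟨(xs, ys), Finset.mem_offDiag.mpr ⟨hxsU, hysU, hxsys⟩, rfl⟩
  set t₀ := pairs.min' hpairsne with ht₀
  have ht₀le : ∀ {x y : V}, x ∈ U₀ → y ∈ U₀ → x ≠ y → t₀ ≤ mf x y := by
    intro x y hx hy hxy
    exact Finset.min'_le _ _ (Finset.mem_image.mpr ⟨(x, y), Finset.mem_offDiag.mpr ⟨hx, hy, hxy⟩, rfl⟩)
  have ht₀attained : ∃ x y, x ∈ U₀ ∧ y ∈ U₀ ∧ x ≠ y ∧ mf x y = t₀ := by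
    have hmm' : pairs.min' hpairsne ∈ (U₀.offDiag).image (fun p => mf p.1 p.2) := by
      rw [← hpairs]; exact Finset.min'_mem pairs hpairsne
    obtain ⟨p, hp, hpe⟩ := Finset.mem_image.mp hmm'
    rw [Finset.mem_offDiag] at hp
    exact ⟨p.1, p.2, hp.1, hp.2.1, hp.2.2, hpe⟩
  obtain ⟨xm, ym, hxmU, hymU, hxmym, hmf0⟩ := ht₀attained
  have ht₀i : t₀ < i := hmf0 ▸ hmf_lt hxmU hymU hxmym
  -- classes
  set cls : V → V := fun v => P^[i - t₀ - 1] v with hcls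
  have hcls_of_cross : ∀ {x y : V}, x ∈ U₀ → y ∈ U₀ → cls x ≠ cls y →
      (P^[i - t₀] x = P^[i - t₀] y) ∧ (P^[i - t₀ - 1] x ≠ P^[i - t₀ - 1] y) := by
    intro x y hx hy hne
    have hxy : x ≠ y := fun h => hne (by rw [h])
    have hle : mf x y ≤ t₀ := by
      by_contra hgt
      push_neg at hgt
      have ht1 : (t₀ + 1) ∈ F x y := hFdown (hmf_mem hx hy) (by omega)
      rw [hFmem] at ht1
      refine hne ?_
      show P^[i - t₀ - 1] x = P^[i - t₀ - 1] y
      have hidx : i - (t₀ + 1) = i - t₀ - 1 := by omega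
      rw [← hidx]
      exact ht1.2
    have heq : mf x y = t₀ := le_antisymm hle (ht₀le hx hy hxy)
    have ht0F : t₀ ∈ F x y := heq ▸ hmf_mem hx hy
    rw [hFmem] at ht0F
    exact ⟨ht0F.2, hne⟩
  have hcls_cross_exists : cls xm ≠ cls ym := by
    intro hne
    have ht1 : (t₀ + 1) ∈ F xm ym := by
      rw [hFmem]
      refine ⟨by omega, ?_⟩
      have hidx : i - (t₀ + 1) = i - t₀ - 1 := by omega
      rw [hidx]
      exact hne
    have := hmf_le ht1
    omega
  -- find a mixed common neighbor by walking
  have claim : ∀ n (x y : V), x ∈ U₀ → y ∈ U₀ → cls x ≠ cls y →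
      ∀ w : Bt.Walk x y, w.length = n →
      ∃ wm xx yy, xx ∈ U₀ ∧ yy ∈ U₀ ∧ Bt.Adj wm xx ∧ Bt.Adj wm yy ∧ cls xx ≠ cls yy
        ∧ wm ∈ T' ∧ wm ∈ Li1 := by
    intro n
    induction n using Nat.strong_induction_on with
    | _ n ih =>
      intro x y hx hy hclsxy w hw
      have hxLi : x ∈ Li := (Finset.mem_inter.mp hx).2
      have hyLi : y ∈ Li := (Finset.mem_inter.mp hy).2
      cases w with
      | nil => exact absurd rfl hclsxy
      | @cons _ z₁ _ h₁ w₁ =>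
        have hz₁Li1 : z₁ ∈ Li1 := by
          rcases hcross h₁ with ⟨_, h2⟩ | ⟨h1, _⟩
          · exact h2
          · exact absurd h1 (fun hh => hnotboth x hxLi hh)
        have hz₁T' : z₁ ∈ T' := hT'adj ((hU₀mem hx).1) h₁
        cases w₁ with
        | nil => exact absurd hz₁Li1 (fun hh => hnotboth y hyLi hh)
        | @cons _ z₂ _ h₂ w₂ =>
          have hz₂Li : z₂ ∈ Li := by
            rcases hcross h₂ with ⟨h1, _⟩ | ⟨_, h2⟩
            · exact absurd h1 (fun hh => hnotboth z₁ hh hz₁Li1)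
            · exact h2
          have hz₂T' : z₂ ∈ T' := hT'adj hz₁T' h₂
          have hz₂U : z₂ ∈ U₀ := by rw [hU₀, Finset.mem_inter]; exact ⟨hz₂T', hz₂Li⟩
          by_cases hcz : cls z₂ = cls x
          · -- recurse
            have hlen : w₂.length < n := by
              rw [← hw]
              simp only [SimpleGraph.Walk.length_cons]
              omega
            exact ih w₂.length hlen z₂ y hz₂U hy (by rw [hcz]; exact hclsxy) w₂ rfl
          · exact ⟨z₁, x, z₂, hx, hz₂U, h₁.symm, h₂, fun hh => hcz hh.symm, hz₁T', hz₁Li1⟩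
  -- start the claim from the minimal pair
  have hreach : Bt.Reachable xm ym := by
    have h1 := (hT'mem.mp (hU₀mem hxmU).1).2
    have h2 := (hT'mem.mp (hU₀mem hymU).1).2
    exact h1.symm.trans h2
  obtain ⟨w0⟩ := hreach
  obtain ⟨wm, xx, yy, hxxU, hyyU, hadjx, hadjy, hclsxxyy, hwmT', hwmLi1⟩ :=
    claim w0.length xm ym hxmU hymU hcls_cross_exists w0 rfl
  -- greedy path from wm avoiding {xx, yy}
  have hxxyy : xx ≠ yy := fun h => hclsxxyy (by rw [h])
  have hwmF : wm ∉ ({xx, yy} : Finset V) := by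
    intro h
    rw [Finset.mem_insert, Finset.mem_singleton] at h
    rcases h with rfl | rfl
    · exact hnotboth wm (Finset.mem_inter.mp hxxU).2 hwmLi1
    · exact hnotboth wm (Finset.mem_inter.mp hyyU).2 hwmLi1
  have hcardF : ({xx, yy} : Finset V).card = 2 := Finset.card_pair hxxyy
  obtain ⟨z, p, hppath, hplen, hpsupp⟩ := greedy Bt T' (2*k+2) hT'deg
    (2*(k-i+t₀) - 1) {xx, yy} wm hwmT' hwmF (by rw [hcardF]; omega)
  -- z is in the lower layer
  have hzT' : z ∈ T' := (hpsupp z p.start_mem_support).1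
  have hwm_dist : H.dist r wm = i + 1 := ((mem_layer).mp hwmLi1).2
  have hwm_reach : H.Reachable r wm := ((mem_layer).mp hwmLi1).1
  have hplodd : p.length = 2*(k-i+t₀) - 1 := hplen
  have hm1 : 1 ≤ k - i + t₀ := by omega
  have hzLi : z ∈ Li := by
    have hzA := hT'A hzT'
    rw [Finset.mem_union] at hzA
    rcases hzA with h | h
    · exact h
    · exfalso
      -- parity contradiction
      have hzd : H.dist r z = i + 1 := ((mem_layer).mp h).2
      have hzr : H.Reachable r z := ((mem_layer).mp h).1
      have e1 := walk_parity hc (p.mapLe hBtH)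
      have hlen' : (p.mapLe hBtH).length = p.length := SimpleGraph.Walk.length_map _ _
      rw [hlen', hplodd] at e1
      have hodd : ((2*(k-i+t₀) - 1 : ℕ) : ZMod 2) = 1 := by
        have hrw : 2*(k-i+t₀) - 1 = 2*((k-i+t₀) - 1) + 1 := by omega
        rw [hrw]
        push_cast
        have h2 : (2 : ZMod 2) = 0 := by decide
        linear_combination (((k-i+t₀) - 1 : ℕ) : ZMod 2) * h2
      rw [hodd] at e1
      have p1 := dist_parity hc hzr
      have p2 := dist_parity hc hwm_reach
      rw [hzd] at p1
      rw [hwm_dist] at p2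
      have hcontr : (1 : ZMod 2) = 0 := by linear_combination e1 + p1 - p2
      exact absurd hcontr (by decide)
  have hzU : z ∈ U₀ := by rw [hU₀, Finset.mem_inter]; exact ⟨hzT', hzLi⟩
  have hzF : z ∉ ({xx, yy} : Finset V) := (hpsupp z p.start_mem_support).2
  -- choose the endpoint with different class from z
  obtain ⟨e₁, he₁U, he₁adj, he₁cls, he₁F⟩ :
      ∃ e₁, e₁ ∈ U₀ ∧ Bt.Adj e₁ wm ∧ cls e₁ ≠ cls z ∧ e₁ ∈ ({xx, yy} : Finset V) := by
    by_cases hczz : cls xx = cls z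
    · refine ⟨yy, hyyU, hadjy.symm, ?_, by simp⟩
      rw [← hczz]
      exact fun h => hclsxxyy h.symm
    · exact ⟨xx, hxxU, hadjx.symm, hczz, by simp⟩
  have he₁z : e₁ ≠ z := fun h => he₁cls (by rw [h])
  -- the crossing pair data
  obtain ⟨hPeq, hPne⟩ := hcls_of_cross he₁U hzU he₁cls
  -- the exact-length path
  have he₁notp : e₁ ∉ p.support := by
    intro hmem
    exact (hpsupp e₁ hmem).2 he₁F
  have hQpath : (SimpleGraph.Walk.cons he₁adj p.reverse).IsPath := by
    rw [SimpleGraph.Walk.cons_isPath_iff]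
    constructor
    · exact hppath.reverse
    · rw [SimpleGraph.Walk.support_reverse, List.mem_reverse]
      exact he₁notp
  have hQlen : (SimpleGraph.Walk.cons he₁adj p.reverse).length = 2*(k-i+t₀) := by
    rw [SimpleGraph.Walk.length_cons, SimpleGraph.Walk.length_reverse, hplodd]
    omega
  have hQsupp : ∀ x ∈ (SimpleGraph.Walk.cons he₁adj p.reverse).support,
      H.Reachable r x ∧ i ≤ H.dist r x := by
    intro x hx
    rw [SimpleGraph.Walk.support_cons, List.mem_cons] at hx
    rcases hx with rfl | hx
    · obtain ⟨_, h1, h2⟩ := hU₀mem he₁U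
      exact ⟨h1, by omega⟩
    · rw [SimpleGraph.Walk.support_reverse, List.mem_reverse] at hx
      exact hT'layer (hpsupp x hx).1
  -- transfer to H and build the cycle
  have he₁r : H.Reachable r e₁ := (hU₀mem he₁U).2.1
  have he₁d : H.dist r e₁ = i := (hU₀mem he₁U).2.2
  have hzr : H.Reachable r z := (hU₀mem hzU).2.1
  have hzd : H.dist r z = i := (hU₀mem hzU).2.2
  refine cycle_of_crossing_path hP hcyc ht₀i (by omega) he₁r hzr he₁d hzd hPeq hPne
    ((SimpleGraph.Walk.cons he₁adj p.reverse).mapLe hBtH) (SimpleGraph.Walk.IsPath.mapLe hBtH hQpath) ?_ ?_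
  · rw [SimpleGraph.Walk.length_map]
    exact hQlen
  · intro x hx
    rw [mapLe_support] at hx
    exact hQsupp x hx


include hP hc in
lemma core {k : ℕ} (hk : 2 ≤ k)
    (hcyc : ∀ (u : V) (w : H.Walk u u), w.IsCycle → w.length ≠ 2 * k)
    {d : ℝ}
    (hdeg : ∀ v, H.Reachable r v → d < ((nbr H v).card : ℝ))
    (hρ : 1 ≤ (d - (6*k+3))/(2*k+1)) :
    ((d - (6*k+3))/(2*k+1))^(k-1) * d ≤ (Fintype.card V : ℝ) := by
  classical
  have hkpos : (0:ℝ) < 2*k+1 := by positivity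
  have hd1 : (2*k+1:ℝ) ≤ d - (6*k+3) := by
    rwa [le_div_iff₀ hkpos, one_mul] at hρ
  have hd0 : (1:ℝ) ≤ d := by nlinarith
  have hρ0 : (0:ℝ) < (d - (6*k+3))/(2*k+1) := lt_of_lt_of_le one_pos hρ
  have hrr : H.Reachable r r := SimpleGraph.Reachable.refl r
  have hL0 : layer H r 0 = {r} := by
    ext v
    rw [mem_layer, Finset.mem_singleton]
    constructor
    · rintro ⟨h1, h2⟩
      exact (h1.dist_eq_zero_iff.mp h2).symm
    · rintro rfl
      exact ⟨hrr, SimpleGraph.dist_self⟩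
  have hL1 : layer H r 1 = nbr H r := by
    ext v
    rw [mem_layer, mem_nbr]
    constructor
    · rintro ⟨h1, h2⟩
      obtain ⟨u, hu1, hu2, hu3⟩ := exists_parent h1 (by omega)
      have hu0 : H.dist r u = 0 := by omega
      have : u = r := (hu2.dist_eq_zero_iff.mp hu0).symm
      rw [this] at hu1
      exact hu1.symm
    · intro h
      have hreach : H.Reachable r v := h.reachable
      have hle : H.dist r v ≤ 1 := by
        have := H.dist_le (SimpleGraph.Walk.cons h SimpleGraph.Walk.nil)
        simpa using this
      have hne : H.dist r v ≠ 0 := by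
        intro h0
        have : r = v := hreach.dist_eq_zero_iff.mp h0
        rw [this] at h
        exact H.loopless.irrefl v h
      exact ⟨hreach, by omega⟩
  have hsplit : ∀ i : ℕ, 1 ≤ i → ∀ v ∈ layer H r i,
      (nbr H v).card = (nbr H v ∩ layer H r (i-1)).card
        + (nbr H v ∩ layer H r (i+1)).card := by
    intro i hi v hv
    obtain ⟨hvr, hvd⟩ := mem_layer.mp hv
    have hunion : nbr H v = (nbr H v ∩ layer H r (i-1)) ∪ (nbr H v ∩ layer H r (i+1)) := by
      ext x
      simp only [Finset.mem_union, Finset.mem_inter, mem_nbr]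
      constructor
      · intro hx
        have hxr : H.Reachable r x := hvr.trans hx.reachable
        rcases adj_dist hc hvr hx with h | h
        · right
          exact ⟨hx, mem_layer.mpr ⟨hxr, by omega⟩⟩
        · left
          exact ⟨hx, mem_layer.mpr ⟨hxr, by omega⟩⟩
      · rintro (⟨hx, _⟩ | ⟨hx, _⟩) <;> exact hx
    have hd : Disjoint (nbr H v ∩ layer H r (i-1)) (nbr H v ∩ layer H r (i+1)) := by
      have hd0 : Disjoint (layer H r (i-1)) (layer H r (i+1)) := layer_disjoint (by omega)
      exact Finset.disjoint_of_subset_left Finset.inter_subset_right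
        (Finset.disjoint_of_subset_right Finset.inter_subset_right hd0)
    have hcu := Finset.card_union_of_disjoint hd
    rw [← hunion] at hcu
    exact hcu
  have hEup : ∀ j : ℕ, j + 1 ≤ k →
      ∑ v ∈ layer H r j, ((nbr H v) ∩ layer H r (j+1)).card
        ≤ (2*k+1) * ((layer H r j).card + (layer H r (j+1)).card) := by
    intro j hj
    rcases Nat.eq_zero_or_pos j with rfl | hj1
    · rw [hL0, Finset.sum_singleton]
      have h1 : ((nbr H r) ∩ layer H r (0+1)).card ≤ (layer H r (0+1)).card :=
        Finset.card_le_card Finset.inter_subset_right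
      have h2 : ({r} : Finset V).card = 1 := Finset.card_singleton r
      rw [h2]
      nlinarith [h1]
    · exact sparsity hP hc hk hcyc j hj1 hj
  have hgrow : ∀ i : ℕ, 1 ≤ i → i ≤ k →
      ((d - (6*k+3))/(2*k+1))^(i-1) * d ≤ ((layer H r i).card : ℝ)
        ∧ ((layer H r (i-1)).card : ℝ) ≤ ((layer H r i).card : ℝ) := by
    intro i
    induction i with
    | zero => omega
    | succ n ih =>
      intro h1 h2
      rcases Nat.eq_zero_or_pos n with rfl | hn1
      · have hcard1 : d < ((layer H r 1).card : ℝ) := by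
          rw [hL1]; exact hdeg r hrr
        constructor
        · simpa using hcard1.le
        · simp only [Nat.add_sub_cancel, hL0, Finset.card_singleton]
          push_cast
          nlinarith
      · obtain ⟨ihA, ihB⟩ := ih (by omega) (by omega)
        have hstep : d * ((layer H r n).card : ℝ)
            ≤ ((∑ v ∈ layer H r n, (nbr H v).card : ℕ) : ℝ) := by
          have hterm : ∀ v ∈ layer H r n, d ≤ (((nbr H v).card : ℕ) : ℝ) := by
            intro v hv
            exact (hdeg v (mem_layer.mp hv).1).le
          calc d * ((layer H r n).card : ℝ)
              = ∑ _v ∈ layer H r n, d := by rw [Finset.sum_const, nsmul_eq_mul]; ring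
            _ ≤ ∑ v ∈ layer H r n, (((nbr H v).card : ℕ) : ℝ) := Finset.sum_le_sum hterm
            _ = _ := by push_cast; ring
        have hsum_split : ∑ v ∈ layer H r n, (nbr H v).card
            = ∑ v ∈ layer H r n, ((nbr H v) ∩ layer H r (n-1)).card
              + ∑ v ∈ layer H r n, ((nbr H v) ∩ layer H r (n+1)).card := by
          rw [← Finset.sum_add_distrib]
          exact Finset.sum_congr rfl (fun v hv => hsplit n hn1 v hv)
        have hdc : ∑ v ∈ layer H r n, ((nbr H v) ∩ layer H r (n-1)).card
            = ∑ v ∈ layer H r (n-1), ((nbr H v) ∩ layer H r n).card :=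
          double_count H _ _
        have hEdown : ∑ v ∈ layer H r (n-1), ((nbr H v) ∩ layer H r n).card
            ≤ (2*k+1) * ((layer H r (n-1)).card + (layer H r n).card) := by
          have hrw : (n - 1) + 1 = n := by omega
          have := hEup (n-1) (by omega)
          rwa [hrw] at this
        have hEupn : ∑ v ∈ layer H r n, ((nbr H v) ∩ layer H r (n+1)).card
            ≤ (2*k+1) * ((layer H r n).card + (layer H r (n+1)).card) :=
          hEup n (by omega)
        have htotal : ∑ v ∈ layer H r n, (nbr H v).card
            ≤ (2*k+1) * ((layer H r (n-1)).card + (layer H r n).card)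
              + (2*k+1) * ((layer H r n).card + (layer H r (n+1)).card) := by
          omega
        have htotalR : ((∑ v ∈ layer H r n, (nbr H v).card : ℕ) : ℝ)
            ≤ (2*(k:ℝ)+1) * (((layer H r (n-1)).card : ℝ) + ((layer H r n).card : ℝ))
              + (2*(k:ℝ)+1) * (((layer H r n).card : ℝ) + ((layer H r (n+1)).card : ℝ)) := by
          have := (Nat.cast_le (α := ℝ)).mpr htotal
          push_cast at this
          exact_mod_cast htotal
        have hcomb : d * ((layer H r n).card : ℝ)
            ≤ (2*(k:ℝ)+1) * (3 * ((layer H r n).card : ℝ) + ((layer H r (n+1)).card : ℝ)) := by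
          nlinarith [hstep, htotalR, ihB]
        have hbpos : (0:ℝ) < ((layer H r n).card : ℝ) := by
          have hlb : (0:ℝ) < ((d - (6*k+3))/(2*k+1))^(n-1) * d := by positivity
          linarith [lt_of_lt_of_le hlb ihA]
        have hρb : ((d - (6*k+3))/(2*k+1)) * ((layer H r n).card : ℝ)
            ≤ ((layer H r (n+1)).card : ℝ) := by
          rw [div_mul_eq_mul_div, div_le_iff₀ hkpos]
          nlinarith [hcomb]
        constructor
        · have hpow : ((d - (6*k+3))/(2*k+1))^(n+1-1) * d
              = ((d - (6*k+3))/(2*k+1)) * (((d - (6*k+3))/(2*k+1))^(n-1) * d) := by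
            have : n + 1 - 1 = (n-1) + 1 := by omega
            rw [this, pow_succ]
            ring
          rw [hpow]
          calc ((d - (6*k+3))/(2*k+1)) * (((d - (6*k+3))/(2*k+1))^(n-1) * d)
              ≤ ((d - (6*k+3))/(2*k+1)) * ((layer H r n).card : ℝ) := by
                exact mul_le_mul_of_nonneg_left ihA hρ0.le
            _ ≤ _ := hρb
        · simp only [Nat.add_sub_cancel]
          calc ((layer H r n).card : ℝ)
              ≤ ((d - (6*k+3))/(2*k+1)) * ((layer H r n).card : ℝ) := by
                nlinarith [hbpos]
            _ ≤ _ := hρb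
  obtain ⟨hfin, _⟩ := hgrow k (by omega) (le_refl k)
  refine le_trans hfin ?_
  have hcard : (layer H r k).card ≤ Fintype.card V := by
    simpa using Finset.card_le_univ (layer H r k)
  exact_mod_cast hcard

end Sparsity


end BondySimonovitsProof

open BondySimonovitsProof in
/-- Bondy–Simonovits: a bipartite graph on `v` vertices with no cycle of length `2k` has at
most `100·k·v^{1+1/k}` edges. -/
theorem bondy_simonovits (V : Type*) [Fintype V] (G : SimpleGraph V) [DecidableRel G.Adj]
    (k : ℕ) (hk : 2 ≤ k) (hbip : G.Colorable 2)
    (hcyc : ∀ (v : V) (w : G.Walk v v), w.IsCycle → w.length ≠ 2 * k) :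
    (G.edgeFinset.card : ℝ) ≤ 100 * k * (Fintype.card V : ℝ) ^ (1 + 1 / (k : ℝ)) := by
  classical
  by_contra hlt
  push_neg at hlt
  -- the 2-coloring, as a `ZMod 2` function
  obtain ⟨C⟩ := hbip
  set c : V → ZMod 2 := fun v => (((C v : Fin 2) : ℕ) : ZMod 2) with hcdef
  have hfin2 : ∀ x y : Fin 2, x ≠ y → ((x : ℕ) : ZMod 2) ≠ ((y : ℕ) : ZMod 2) := by decide
  have hcG : ∀ {a b : V}, G.Adj a b → c a ≠ c b := by
    intro a b hab
    exact hfin2 _ _ (C.valid hab)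
  -- basic counting
  have hsum_deg : ∑ v : V, (nbr G v).card = 2 * G.edgeFinset.card := by
    have h1 : ∀ v : V, (nbr G v).card = G.degree v := by
      intro v
      have : nbr G v = G.neighborFinset v := by
        ext x
        rw [mem_nbr, SimpleGraph.mem_neighborFinset]
      rw [this]
      rfl
    rw [Finset.sum_congr rfl (fun v _ => h1 v)]
    exact G.sum_degrees_eq_twice_card_edges
  -- nondegeneracy
  have hn0 : 0 < Fintype.card V := by
    rcases Nat.eq_zero_or_pos (Fintype.card V) with h | h
    · exfalso
      have he : G.edgeFinset.card = 0 := by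
        have hz : ∑ v : V, (nbr G v).card = 0 := by
          haveI := Fintype.card_eq_zero_iff.mp h
          simp
        omega
      rw [he, h] at hlt
      have hge : (0:ℝ) ≤ 100 * k * ((0:ℕ) : ℝ) ^ (1 + 1 / (k : ℝ)) := by positivity
      push_cast at hlt ⊢
      linarith
    · exact h
  have hn1 : (1:ℝ) ≤ (Fintype.card V : ℝ) := by exact_mod_cast hn0
  have hnx1 : (1:ℝ) ≤ ((Fintype.card V : ℝ)) ^ ((1:ℝ) / (k:ℝ)) := by
    apply Real.one_le_rpow hn1
    positivity
  have hk2 : (2:ℝ) ≤ (k:ℝ) := by exact_mod_cast hk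
  set nx : ℝ := ((Fintype.card V : ℝ)) ^ ((1:ℝ) / (k:ℝ)) with hnx
  set d : ℝ := 100 * k * nx with hd
  have hd0 : (0:ℝ) ≤ d := by positivity
  -- extract the min-degree subset
  have hrpow_split : ((Fintype.card V : ℝ)) ^ (1 + 1 / (k : ℝ))
      = (Fintype.card V : ℝ) * nx := by
    rw [hnx, Real.rpow_add (by exact_mod_cast hn0), Real.rpow_one]
  have hmind := exists_min_degree_subset G d hd0 Finset.univ (by
    have h1 : ∑ v ∈ Finset.univ, (((nbr G v) ∩ Finset.univ).card : ℝ)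
        = ((2 * G.edgeFinset.card : ℕ) : ℝ) := by
      rw [← hsum_deg]
      push_cast
      refine Finset.sum_congr rfl (fun v _ => ?_)
      rw [Finset.inter_univ]
    rw [h1, Finset.card_univ]
    rw [hrpow_split] at hlt
    push_cast
    nlinarith [hlt])
  obtain ⟨S, hSuniv, hSne, hSdeg⟩ := hmind
  obtain ⟨r, hrS⟩ := hSne
  -- the induced subgraph
  set H : SimpleGraph V :=
    { Adj := fun a b => G.Adj a b ∧ a ∈ S ∧ b ∈ S,
      symm := ⟨fun a b h => ⟨h.1.symm, h.2.2, h.2.1⟩⟩,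
      loopless := ⟨fun a h => G.loopless.irrefl a h.1⟩ } with hH
  have hHG : H ≤ G := by intro a b hab; exact hab.1
  have hcH : ∀ {a b : V}, H.Adj a b → c a ≠ c b := fun hab => hcG hab.1
  have hcycH : ∀ (u : V) (w : H.Walk u u), w.IsCycle → w.length ≠ 2 * k := by
    intro u w hw hwl
    refine hcyc u (w.mapLe hHG) (SimpleGraph.Walk.IsCycle.mapLe hHG hw) ?_
    rw [SimpleGraph.Walk.length_map]
    exact hwl
  -- reachable vertices stay in S
  have hwalkS : ∀ (u v : V), u ∈ S → H.Walk u v → v ∈ S := by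
    intro u v hu w
    induction w with
    | nil => exact hu
    | cons h p ih => exact ih h.2.2
  have hreachS : ∀ v : V, H.Reachable r v → v ∈ S := by
    intro v hv
    obtain ⟨w⟩ := hv
    exact hwalkS r v hrS w
  -- the parent function
  have hPex : ∀ v : V, ∃ u : V, (H.Reachable r v → 0 < H.dist r v →
      H.Adj v u ∧ H.Reachable r u ∧ H.dist r u + 1 = H.dist r v) := by
    intro v
    by_cases hcase : H.Reachable r v ∧ 0 < H.dist r v
    · obtain ⟨u, hu⟩ := exists_parent hcase.1 hcase.2
      exact ⟨u, fun _ _ => hu⟩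
    · exact ⟨v, fun h1 h2 => absurd ⟨h1, h2⟩ hcase⟩
  choose P hP using hPex
  -- min degree in H
  have hdegH : ∀ v : V, H.Reachable r v → d < ((nbr H v).card : ℝ) := by
    intro v hv
    have hvS : v ∈ S := hreachS v hv
    have hnbrH : nbr H v = (nbr G v) ∩ S := by
      ext x
      rw [mem_nbr, Finset.mem_inter, mem_nbr]
      constructor
      · intro h; exact ⟨h.1, h.2.2⟩
      · intro h; exact ⟨h.1, hvS, h.2⟩
    rw [hnbrH]
    exact hSdeg v hvS
  -- apply the core bound
  have hρ : (1:ℝ) ≤ (d - (6*k+3))/(2*k+1) := by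
    rw [le_div_iff₀ (by positivity : (0:ℝ) < 2*(k:ℝ)+1), one_mul]
    rw [hd]
    nlinarith
  have hcore := core hP hcH hk hcycH hdegH hρ
  -- final numeric contradiction
  have hρ30 : 30 * nx ≤ (d - (6*k+3))/(2*k+1) := by
    rw [le_div_iff₀ (by positivity : (0:ℝ) < 2*(k:ℝ)+1)]
    rw [hd]
    nlinarith
  have hnx0 : (0:ℝ) < nx := lt_of_lt_of_le one_pos hnx1
  have hpow : (30 * nx)^(k-1) * d ≤ ((d - (6*k+3))/(2*k+1))^(k-1) * d := by
    have h30 : (0:ℝ) ≤ 30 * nx := by positivity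
    exact mul_le_mul_of_nonneg_right (pow_le_pow_left₀ h30 hρ30 (k-1)) hd0
  have hnxk : nx^(k:ℕ) = (Fintype.card V : ℝ) := by
    rw [hnx, ← Real.rpow_natCast (((Fintype.card V : ℝ)) ^ ((1:ℝ) / (k:ℝ))) k,
      ← Real.rpow_mul (by positivity)]
    rw [one_div_mul_cancel (by positivity : (k:ℝ) ≠ 0), Real.rpow_one]
  have hlow : 200 * (Fintype.card V : ℝ) ≤ (30 * nx)^(k-1) * d := by
    have hsplit : (30 * nx)^(k-1) * d = 30^(k-1) * (100 * k) * (nx^(k-1) * nx) := by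
      rw [mul_pow, hd]
      ring
    have hnxpow : nx^(k-1) * nx = nx^(k:ℕ) := by
      rw [← pow_succ]
      congr 1
      omega
    rw [hsplit, hnxpow, hnxk]
    have h30p : (1:ℝ) ≤ 30^(k-1) := one_le_pow₀ (by norm_num)
    have h1 : (200:ℝ) ≤ 100*(k:ℝ) := by nlinarith
    have h2 : (200:ℝ) ≤ 30^(k-1) * (100*(k:ℝ)) := by
      have h3 : (1:ℝ) * (100*(k:ℝ)) ≤ 30^(k-1) * (100*(k:ℝ)) :=
        mul_le_mul_of_nonneg_right h30p (by positivity)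
      nlinarith
    calc 200 * (Fintype.card V : ℝ)
        ≤ (30^(k-1) * (100*(k:ℝ))) * (Fintype.card V : ℝ) :=
          mul_le_mul_of_nonneg_right h2 (by positivity)
      _ = 30^(k-1) * (100*(k:ℝ)) * (Fintype.card V : ℝ) := by ring
  have : 200 * (Fintype.card V : ℝ) ≤ (Fintype.card V : ℝ) :=
    le_trans hlow (le_trans hpow hcore)
  linarith
end
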